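/- arXiv:0901.0435 — 3 statements merged into one kernel-verified Lean document; each statement's English description precedes it below -/
import Mathlib

section
/- Let a, c be real numbers with c not a nonpositive integer, and let m, n be positive integers with m ≥ n - 1. If c > a > n - m - 1, then all n zeros of the polynomial Q_{mn}(z) = ₂F₁(-n, -a-m; -c-m-n+1; z) are real and simple and lie in the open interval (1, ∞). -/
open Finset Polynomial

/-- falling factorial for real `x`: `x (x-1) ⋯ (x-k+1)` -/
noncomputable def fall (x : ℝ) (k : ℕ) : ℝ := ∏ i ∈ Finset.range k, (x - i)

lemma fall_zero (x : ℝ) : fall x 0 = 1 := by simp [fall]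

lemma fall_succ (x : ℝ) (k : ℕ) : fall x (k + 1) = fall x k * (x - k) := by
  simp [fall, Finset.prod_range_succ]

lemma fall_succ' (x : ℝ) (k : ℕ) : fall x (k + 1) = x * fall (x - 1) k := by
  rw [fall, Finset.prod_range_succ']
  simp only [Nat.cast_zero, sub_zero, Nat.cast_add, Nat.cast_one]
  rw [mul_comm, fall]
  congr 1
  apply Finset.prod_congr rfl
  intro i _
  ring

lemma fall_add (x : ℝ) (p q : ℕ) : fall x (p + q) = fall x p * fall (x - p) q := by
  induction q with
  | zero => simp [fall_zero]
  | succ q ih =>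
      rw [← Nat.add_assoc, fall_succ, ih, fall_succ, mul_assoc]
      congr 2
      push_cast; ring

noncomputable def pcoef (A B : ℝ) (k i : ℕ) : ℝ :=
  (-1) ^ i * (k.choose i) * fall A (k - i) * fall (A + B - k + i) i

lemma pcoef_eq_zero (A B : ℝ) {k i : ℕ} (h : k < i) : pcoef A B k i = 0 := by
  simp [pcoef, Nat.choose_eq_zero_of_lt h]

noncomputable def PP (A B : ℝ) (k : ℕ) : Polynomial ℝ :=
  ∑ i ∈ Finset.range (k + 1), Polynomial.C (pcoef A B k i) * Polynomial.X ^ i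

lemma PP_coeff (A B : ℝ) (k i : ℕ) :
    (PP A B k).coeff i = if i ≤ k then pcoef A B k i else 0 := by
  simp only [PP, Polynomial.finset_sum_coeff, Polynomial.coeff_C_mul, Polynomial.coeff_X_pow,
    mul_ite, mul_one, mul_zero]
  rw [Finset.sum_ite_eq (Finset.range (k+1)) i (fun j => pcoef A B k j)]
  simp [Nat.lt_succ_iff]

lemma PP_coeff' (A B : ℝ) (k i : ℕ) : (PP A B k).coeff i = pcoef A B k i := by
  rw [PP_coeff]
  split_ifs with h
  · rfl
  · rw [pcoef_eq_zero _ _ (by omega)]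




/-- The Pochhammer symbol `(x)_k = x (x+1) ⋯ (x+k-1)` for a real number `x`. -/
noncomputable def poch (x : ℝ) (k : ℕ) : ℝ := ∏ i ∈ Finset.range k, (x + i)

/-- The terminating Gauss hypergeometric polynomial `₂F₁(-n, b; d; z)`
    as a real polynomial in `z`. -/
noncomputable def hypPoly (n : ℕ) (b d : ℝ) : Polynomial ℝ :=
  ∑ k ∈ Finset.range (n + 1),
    Polynomial.C ((poch (-(n : ℝ)) k * poch b k) / (poch d k * (Nat.factorial k))) *
      Polynomial.X ^ k

/-- The denominator polynomial `Q_{mn}(z) = ₂F₁(-n, -a-m; -c-m-n+1; z)` of the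
`[m/n]` Padé approximant for `₂F₁(a, 1; c; z)`. -/
noncomputable def padeDenom (m n : ℕ) (a c : ℝ) : Polynomial ℝ :=
  hypPoly n (-a - m) (-c - m - n + 1)

lemma pcoef_succ_zero (A B : ℝ) (k : ℕ) :
    pcoef A B (k + 1) 0 = (A - k) * pcoef A B k 0 := by
  simp [pcoef, fall_succ, fall_zero]; ring

lemma pcoef_rec (A B : ℝ) (k j : ℕ) :
    pcoef A B (k + 1) (j + 1)
      = (A - k + j + 1) * pcoef A B k (j + 1) - (A + B - 2 * k + j) * pcoef A B k j := by
  rcases lt_trichotomy j k with hjk | rfl | hjk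
  · -- j < k
    obtain ⟨d, rfl⟩ : ∃ d, k = j + d + 1 := ⟨k - j - 1, by omega⟩
    have h1 : j + d + 1 + 1 - (j + 1) = d + 1 := by omega
    have h2 : j + d + 1 - (j + 1) = d := by omega
    have h3 : j + d + 1 - j = d + 1 := by omega
    unfold pcoef
    rw [h1, h2, h3]
    have e1 : A + B - ↑(j + d + 1 + 1) + ↑(j + 1) = A + B - ↑d - 1 := by push_cast; ring
    have e2 : A + B - ↑(j + d + 1) + ↑(j + 1) = (A + B - ↑d - 1) + 1 := by push_cast; ring
    have e3 : A + B - ↑(j + d + 1) + ↑j = A + B - ↑d - 1 := by push_cast; ring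
    rw [e1, e2, e3, fall_succ, fall_succ (A + B - ↑d - 1) j, fall_succ' (A + B - ↑d - 1 + 1) j]
    have e4 : A + B - ↑d - 1 + 1 - 1 = A + B - ↑d - 1 := by ring
    rw [e4]
    have pascal : (j + d + 1 + 1).choose (j + 1) = (j + d + 1).choose j + (j + d + 1).choose (j + 1) :=
      Nat.choose_succ_succ _ _
    rw [pascal]
    have hkey : (((j + d + 1).choose (j + 1) : ℝ)) * (j + 1) = (((j + d + 1).choose j : ℝ)) * (d + 1) := by
      have := Nat.choose_succ_right_eq (j + d + 1) j
      have h5 : j + d + 1 - j = d + 1 := by omega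
      rw [h5] at this
      exact_mod_cast congrArg (Nat.cast : ℕ → ℝ) this
    push_cast
    linear_combination ((-1 : ℝ)^j * fall A d * fall (A + B - ↑d - 1) j * (A - ↑d)) * hkey
  · -- j = k
    rw [pcoef_eq_zero A B (by omega : j < j + 1)]
    unfold pcoef
    have h1 : j + 1 - (j + 1) = 0 := by omega
    have h2 : j - j = 0 := by omega
    rw [h1, h2, fall_zero]
    have e1 : A + B - ↑(j + 1) + ↑(j + 1) = A + B := by push_cast; ring
    have e2 : A + B - ↑j + ↑j = A + B := by push_cast; ring
    rw [e1, e2, fall_succ]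
    simp [Nat.choose_self]
    push_cast
    ring
  · -- j > k
    rw [pcoef_eq_zero A B (by omega : k + 1 < j + 1), pcoef_eq_zero A B (by omega : k < j + 1),
      pcoef_eq_zero A B hjk]
    ring
lemma PP_rec (A B : ℝ) (k : ℕ) :
    PP A B (k + 1)
      = Polynomial.C (A - k) * PP A B k - Polynomial.C (A + B - 2 * k) * (PP A B k * Polynomial.X)
        + Polynomial.derivative (PP A B k) * Polynomial.X
        - Polynomial.derivative (PP A B k) * Polynomial.X ^ 2 := by
  have hx : ∀ (p : Polynomial ℝ) (i : ℕ), (p * Polynomial.X).coeff i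
      = if 1 ≤ i then p.coeff (i - 1) else 0 := by
    intro p i
    rw [← pow_one (Polynomial.X : Polynomial ℝ), Polynomial.coeff_mul_X_pow']
  ext i
  simp only [Polynomial.coeff_add, Polynomial.coeff_sub, Polynomial.coeff_C_mul,
    hx, Polynomial.coeff_mul_X_pow', PP_coeff', Polynomial.coeff_derivative]
  match i with
  | 0 => norm_num; rw [pcoef_succ_zero]
  | 1 =>
    norm_num [pcoef_rec A B k 0]
    push_cast
    ring
  | (j + 2) =>
    have h1 : (1:ℕ) ≤ j + 2 := by omega
    have h2 : (2:ℕ) ≤ j + 2 := by omega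
    rw [if_pos h1, if_pos h2]
    have e1 : j + 2 - 1 = j + 1 := by omega
    have e2 : j + 2 - 2 = j := by omega
    rw [e1, e2, pcoef_rec A B k (j + 1)]
    push_cast
    ring
open Real Set Filter Topology in
noncomputable def gg (A B : ℝ) (k : ℕ) : ℝ → ℝ :=
  fun t => t ^ (A - k) * (1 - t) ^ (B - k) * (PP A B k).eval t

open Real Set Filter Topology

lemma gg_hasDerivAt (A B : ℝ) (k : ℕ) {t : ℝ} (ht : t ∈ Ioo (0:ℝ) 1) :
    HasDerivAt (gg A B k) (gg A B (k + 1) t) t := by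
  obtain ⟨ht0, ht1⟩ := ht
  set u := A - k with hu
  set v := B - k with hv
  have h1 : HasDerivAt (fun t : ℝ => t ^ u) (u * t ^ (u - 1)) t :=
    Real.hasDerivAt_rpow_const (Or.inl ht0.ne')
  have h2 : HasDerivAt (fun t : ℝ => (1 - t) ^ v) (-1 * v * (1 - t) ^ (v - 1)) t := by
    have hbase : HasDerivAt (fun t : ℝ => 1 - t) (-1) t := by
      simpa using (hasDerivAt_id t).const_sub 1
    exact hbase.rpow_const (Or.inl (by linarith : (1:ℝ) - t ≠ 0))
  have h3 : HasDerivAt (fun t : ℝ => (PP A B k).eval t) ((PP A B k).derivative.eval t) t :=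
    (PP A B k).hasDerivAt t
  have key : HasDerivAt (gg A B k) _ t := (h1.mul h2).mul h3
  convert key using 1
  have htu : t ^ u = t ^ (u - 1) * t := by
    rw [show u = (u - 1) + 1 by ring, Real.rpow_add_one ht0.ne']
    ring_nf
  have htv : (1 - t) ^ v = (1 - t) ^ (v - 1) * (1 - t) := by
    rw [show v = (v - 1) + 1 by ring, Real.rpow_add_one (by linarith : (1:ℝ) - t ≠ 0)]
    ring_nf
  show gg A B (k + 1) t = _
  unfold gg
  rw [PP_rec A B k]
  have e1 : A - ↑(k + 1) = u - 1 := by push_cast; ring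
  have e2 : B - ↑(k + 1) = v - 1 := by push_cast; ring
  rw [e1, e2]
  simp only [Polynomial.eval_add, Polynomial.eval_sub, Polynomial.eval_mul, Polynomial.eval_C,
    Polynomial.eval_X, Polynomial.eval_pow, Pi.mul_apply]
  rw [htu, htv]
  push_cast
  ring

lemma gg_continuous (A B : ℝ) (k : ℕ) (hu : 0 ≤ A - k) (hv : 0 ≤ B - k) :
    Continuous (gg A B k) := by
  rw [continuous_iff_continuousAt]
  intro t
  have c1 : ContinuousAt (fun t : ℝ => t ^ (A - k)) t :=
    Real.continuousAt_rpow_const t _ (Or.inr hu)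
  have c2 : ContinuousAt (fun t : ℝ => (1 - t) ^ (B - k)) t := by
    have couter : ContinuousAt (fun s : ℝ => s ^ (B - k)) (1 - t) :=
      Real.continuousAt_rpow_const _ _ (Or.inr hv)
    exact couter.comp ((continuous_const.sub continuous_id).continuousAt)
  exact (c1.mul c2).mul ((PP A B k).continuous_aeval.continuousAt)
lemma PP_roots (A B : ℝ) (n : ℕ) (hA : ∀ k : ℕ, k < n → 0 < A - k)
    (hB : ∀ k : ℕ, k < n → 0 < B - k) :
    ∀ k, k ≤ n → ∃ x : Fin k → ℝ, StrictMono x ∧ (∀ i, x i ∈ Ioo (0:ℝ) 1) ∧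
      (∀ i, (PP A B k).eval (x i) = 0) := by
  intro k
  induction k with
  | zero =>
    exact fun _ => ⟨Fin.elim0, fun i => i.elim0, fun i => i.elim0, fun i => i.elim0⟩
  | succ k ih =>
    intro hk1
    obtain ⟨x, hxmono, hxmem, hxroot⟩ := ih (by omega)
    have hkn : k < n := by omega
    have hu := hA k hkn
    have hv := hB k hkn
    set y : ℕ → ℝ := fun i =>
      if h : 1 ≤ i ∧ i ≤ k then x ⟨i - 1, by omega⟩ else (if i = 0 then 0 else 1) with hy
    have hy0 : y 0 = 0 := by simp [hy]
    have hy1 : ∀ j, k < j → y j = 1 := by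
      intro j hj
      have : ¬ (1 ≤ j ∧ j ≤ k) := by omega
      simp only [hy, dif_neg this, if_neg (by omega : ¬ j = 0)]
    have hyx : ∀ j (h1 : 1 ≤ j) (h2 : j ≤ k), y j = x ⟨j - 1, by omega⟩ := by
      intro j h1 h2
      simp [hy, h1, h2]
    have hylt : ∀ j, j ≤ k → y j < y (j + 1) := by
      intro j hj
      rcases Nat.eq_zero_or_pos j with rfl | hj0
      · rw [hy0]
        rcases Nat.eq_zero_or_pos k with rfl | hk0
        · rw [hy1 1 (by omega)]; norm_num
        · rw [hyx 1 le_rfl hk0]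
          exact (hxmem _).1
      · rw [hyx j hj0 hj]
        rcases Nat.lt_or_ge k (j + 1) with h | h
        · rw [hy1 (j + 1) h]
          exact (hxmem _).2
        · rw [hyx (j + 1) (by omega) h]
          exact hxmono (by simp [Fin.lt_def]; omega)
    have hicc : ∀ j, y j ∈ Icc (0:ℝ) 1 := by
      intro j
      by_cases h : 1 ≤ j ∧ j ≤ k
      · rw [hyx j h.1 h.2]
        exact ⟨(hxmem _).1.le, (hxmem _).2.le⟩
      · rcases Nat.eq_zero_or_pos j with rfl | hj0
        · rw [hy0]; norm_num
        · rw [hy1 j (by omega)]; norm_num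
    have hmono : ∀ j, j ≤ k + 1 → ∀ i, i < j → y i < y j := by
      intro j
      induction j with
      | zero => intro _ i hi; omega
      | succ j ihj =>
        intro hj i hi
        rcases Nat.lt_or_ge i j with h | h
        · exact (ihj (by omega) i h).trans (hylt j (by omega))
        · have : i = j := by omega
          subst this
          exact hylt i (by omega)
    have hgz : ∀ j, j ≤ k + 1 → gg A B k (y j) = 0 := by
      intro j hj
      by_cases h : 1 ≤ j ∧ j ≤ k
      · rw [hyx j h.1 h.2]
        unfold gg
        rw [hxroot _]
        ring
      · rcases Nat.eq_zero_or_pos j with rfl | hj0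
        · rw [hy0]
          unfold gg
          rw [Real.zero_rpow hu.ne']
          ring
        · rw [hy1 j (by omega)]
          unfold gg
          rw [show (1:ℝ) - 1 = 0 by ring, Real.zero_rpow hv.ne']
          ring
    have H : ∀ j : Fin (k + 1), ∃ c, c ∈ Ioo (y j) (y (j + 1)) ∧ gg A B (k + 1) c = 0 := by
      intro j
      have hjk : (j : ℕ) ≤ k := by omega
      have hlt := hylt j hjk
      have ht0 : Tendsto (gg A B k) (𝓝[>] (y j)) (𝓝 0) := by
        rw [← hgz j (by omega)]
        exact ((gg_continuous A B k hu.le hv.le).tendsto (y j)).mono_left nhdsWithin_le_nhds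
      have ht1 : Tendsto (gg A B k) (𝓝[<] (y (j + 1))) (𝓝 0) := by
        rw [← hgz (j + 1) (by omega)]
        exact ((gg_continuous A B k hu.le hv.le).tendsto (y (j+1))).mono_left nhdsWithin_le_nhds
      have hsub : Ioo (y j) (y (j + 1)) ⊆ Ioo (0:ℝ) 1 := by
        intro t ht
        exact ⟨lt_of_le_of_lt (hicc j).1 ht.1, lt_of_lt_of_le ht.2 (hicc (j + 1)).2⟩
      obtain ⟨c, hc1, hc2⟩ := exists_hasDerivAt_eq_zero' hlt ht0 ht1
        (fun t ht => gg_hasDerivAt A B k (hsub ht))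
      exact ⟨c, hc1, hc2⟩
    choose c hc1 hc2 using H
    have hcmem : ∀ j : Fin (k + 1), c j ∈ Ioo (0:ℝ) 1 := by
      intro j
      exact ⟨lt_of_le_of_lt (hicc j).1 (hc1 j).1, lt_of_lt_of_le (hc1 j).2 (hicc (j + 1)).2⟩
    refine ⟨c, ?_, hcmem, ?_⟩
    · intro i j hij
      have h1 : c i < y ((i : ℕ) + 1) := (hc1 i).2
      have h2 : y (j : ℕ) < c j := (hc1 j).1
      have h3 : y ((i : ℕ) + 1) ≤ y (j : ℕ) := by
        rcases Nat.lt_or_ge ((i : ℕ) + 1) (j : ℕ) with h | h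
        · exact (hmono j (by omega) _ h).le
        · have : (i : ℕ) + 1 = (j : ℕ) := by
            have := Fin.lt_def.1 hij
            omega
          rw [this]
      linarith
    · intro j
      have h := hc2 j
      unfold gg at h
      have hp1 : (c j : ℝ) ^ (A - ↑(k + 1)) ≠ 0 :=
        (Real.rpow_pos_of_pos (hcmem j).1 _).ne'
      have hp2 : (1 - c j : ℝ) ^ (B - ↑(k + 1)) ≠ 0 :=
        (Real.rpow_pos_of_pos (by linarith [(hcmem j).2] : (0:ℝ) < 1 - c j) _).ne'
      rcases mul_eq_zero.1 h with h' | h'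
      · rcases mul_eq_zero.1 h' with h'' | h''
        · exact absurd h'' hp1
        · exact absurd h'' hp2
      · exact h'
lemma poch_eq_fall (x : ℝ) (k : ℕ) : poch x k = (-1) ^ k * fall (-x) k := by
  induction k with
  | zero => simp [poch, fall]
  | succ k ih =>
    rw [poch, Finset.prod_range_succ, ← poch, ih, fall_succ, pow_succ]
    ring

lemma fall_natCast (N k : ℕ) (h : k ≤ N) :
    fall (N : ℝ) k = ((N.descFactorial k : ℕ) : ℝ) := by
  rw [fall, Nat.descFactorial_eq_prod_range, Nat.cast_prod]
  apply Finset.prod_congr rfl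
  intro i hi
  rw [Finset.mem_range] at hi
  rw [Nat.cast_sub (by omega)]

lemma fall_pos_of (x : ℝ) (k : ℕ) (h : ∀ i : ℕ, i < k → 0 < x - i) : 0 < fall x k :=
  Finset.prod_pos (fun i hi => h i (Finset.mem_range.1 hi))

lemma fall_ne_zero_of (x : ℝ) (k : ℕ) (h : ∀ i : ℕ, i < k → x - i ≠ 0) : fall x k ≠ 0 :=
  Finset.prod_ne_zero_iff.2 (fun i hi => h i (Finset.mem_range.1 hi))
lemma coeff_match (a c : ℝ) (m n k : ℕ) (hk : k ≤ n)
    (hAB : fall (a + ↑m + (c - a + ↑n - 1)) n ≠ 0) :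
    poch (-(n:ℝ)) k * poch (-a - ↑m) k / (poch (-c - ↑m - ↑n + 1) k * (Nat.factorial k))
      = ((-1:ℝ)^n / fall (a + ↑m + (c - a + ↑n - 1)) n)
          * pcoef (a + ↑m) (c - a + ↑n - 1) n (n - k) := by
  set AB : ℝ := a + ↑m + (c - a + ↑n - 1) with hABdef
  have e1 : poch (-(n:ℝ)) k = (-1)^k * fall (n:ℝ) k := by
    rw [poch_eq_fall, neg_neg]
  have e2 : poch (-a - ↑m) k = (-1)^k * fall (a + ↑m) k := by
    rw [poch_eq_fall, show -(-a - (m:ℝ)) = a + ↑m by ring]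
  have e3 : poch (-c - ↑m - ↑n + 1) k = (-1)^k * fall AB k := by
    rw [poch_eq_fall, show -(-c - (m:ℝ) - ↑n + 1) = AB by rw [hABdef]; ring]
  have hsplit : fall AB n = fall AB k * fall (AB - ↑k) (n - k) := by
    have h := fall_add AB k (n - k)
    rwa [show k + (n - k) = n by omega] at h
  have hABk : fall AB k ≠ 0 := by
    intro h0
    rw [hsplit, h0, zero_mul] at hAB
    exact hAB rfl
  have hABk2 : fall (AB - ↑k) (n - k) ≠ 0 := by
    intro h0
    rw [hsplit, h0, mul_zero] at hAB
    exact hAB rfl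
  have e5 : pcoef (a + ↑m) (c - a + ↑n - 1) n (n - k)
      = (-1)^(n-k) * (n.choose k : ℝ) * fall (a + ↑m) k * fall (AB - ↑k) (n - k) := by
    unfold pcoef
    rw [show n - (n - k) = k by omega, Nat.choose_symm hk,
      show a + ↑m + (c - a + ↑n - 1) - ↑n + ↑(n - k) = AB - ↑k by
        rw [Nat.cast_sub hk, hABdef]; ring]
  have e6 : fall (n : ℝ) k = (Nat.factorial k : ℝ) * (n.choose k : ℝ) := by
    rw [fall_natCast n k hk, Nat.descFactorial_eq_factorial_mul_choose]
    push_cast; ring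
  have hpow : (-1:ℝ)^(n-k) * (-1)^k = (-1)^n := by
    rw [← pow_add, show n - k + k = n by omega]
  have hk2 : ((-1:ℝ))^k * (-1)^k = 1 := by
    rw [← pow_add]; exact Even.neg_one_pow ⟨k, by ring⟩
  have e4 : (-1:ℝ)^(n-k) = (-1)^n * (-1)^k := by
    rw [← hpow, mul_assoc, hk2, mul_one]
  rw [e1, e2, e3, e5, e6, e4, hsplit]
  have hfact : (Nat.factorial k : ℝ) ≠ 0 := by
    exact_mod_cast Nat.factorial_ne_zero k
  have hneg : ((-1:ℝ))^k ≠ 0 := pow_ne_zero _ (by norm_num)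
  field_simp
  ring_nf
  have h1 : ∀ j : ℕ, (-1:ℝ)^(j*2) = 1 := fun j => by rw [mul_comm, pow_mul]; norm_num
  simp [h1]

/-- If `c > a > n - m - 1`, all `n` zeros of `Q_{mn}` are real, simple and lie in
`(1, ∞)`. -/
theorem pade_poles_7 (a c : ℝ) (hc : ∀ k : ℕ, c ≠ -(k : ℝ))
    (m n : ℕ) (hm : 0 < m) (hn : 0 < n) (hmn : n - 1 ≤ m)
    (hca : c > a) (ha : a > (n : ℝ) - m - 1) :
    ∃ S : Finset ℝ, S.card = n ∧ (∀ x ∈ S, x ∈ Set.Ioi (1 : ℝ)) ∧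
      ((padeDenom m n a c).map (algebraMap ℝ ℂ)).roots = S.val.map (fun x => (x : ℂ)) := by
  classical
  have hA : ∀ k : ℕ, k < n → 0 < (a + ↑m) - k := by
    intro k hk
    have hk' : (k : ℝ) + 1 ≤ (n : ℝ) := by exact_mod_cast hk
    linarith
  have hB : ∀ k : ℕ, k < n → 0 < (c - a + ↑n - 1) - k := by
    intro k hk
    have hk' : (k : ℝ) + 1 ≤ (n : ℝ) := by exact_mod_cast hk
    linarith
  have hABne : fall ((a + ↑m) + (c - a + ↑n - 1)) n ≠ 0 := by
    apply fall_ne_zero_of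
    intro i hi h0
    apply hc (m + n - 1 - i)
    have hcast : ((m + n - 1 - i : ℕ) : ℝ) = ↑m + ↑n - 1 - ↑i := by
      rw [Nat.cast_sub (by omega : i ≤ m + n - 1), Nat.cast_sub (by omega : 1 ≤ m + n)]
      push_cast
      ring
    rw [hcast]
    linarith
  obtain ⟨x, hxmono, hxmem, hxroot⟩ :=
    PP_roots (a + ↑m) (c - a + ↑n - 1) n hA hB n le_rfl
  set K : ℝ := (-1:ℝ)^n / fall ((a + ↑m) + (c - a + ↑n - 1)) n with hKdef
  have hKne : K ≠ 0 := div_ne_zero (pow_ne_zero _ (by norm_num)) hABne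
  set Q : Polynomial ℝ := padeDenom m n a c with hQdef
  have hQ : Q = ∑ k ∈ Finset.range (n+1),
      Polynomial.C (K * pcoef (a + ↑m) (c - a + ↑n - 1) n (n - k)) * Polynomial.X ^ k := by
    rw [hQdef]
    unfold padeDenom hypPoly
    apply Finset.sum_congr rfl
    intro k hk
    rw [Finset.mem_range] at hk
    congr 1
    rw [coeff_match a c m n k (by omega) hABne]
  have hQcoeff : ∀ i, Q.coeff i =
      if i ≤ n then K * pcoef (a + ↑m) (c - a + ↑n - 1) n (n - i) else 0 := by
    intro i
    rw [hQ]
    simp only [Polynomial.finset_sum_coeff, Polynomial.coeff_C_mul, Polynomial.coeff_X_pow,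
      mul_ite, mul_one, mul_zero]
    rw [Finset.sum_ite_eq (Finset.range (n+1)) i
      (fun j => K * pcoef (a + ↑m) (c - a + ↑n - 1) n (n - j))]
    simp [Nat.lt_succ_iff]
  have hfallA : fall (a + ↑m) n ≠ 0 := (fall_pos_of _ _ hA).ne'
  have hQn : Q.coeff n ≠ 0 := by
    rw [hQcoeff n, if_pos le_rfl]
    have : pcoef (a + ↑m) (c - a + ↑n - 1) n (n - n) = fall (a + ↑m) n := by
      rw [show n - n = 0 by omega]
      simp [pcoef, fall_zero]
    rw [this]
    exact mul_ne_zero hKne hfallA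
  have hQne : Q ≠ 0 := fun h => hQn (by rw [h]; simp)
  have hdeg : Q.natDegree = n := by
    refine le_antisymm ?_ (Polynomial.le_natDegree_of_ne_zero hQn)
    rw [Polynomial.natDegree_le_iff_coeff_eq_zero]
    intro N hN
    rw [hQcoeff N, if_neg (by omega)]
  -- roots of Q
  have hxne : ∀ i, x i ≠ 0 := fun i => (hxmem i).1.ne'
  have hQroot : ∀ i, Q.eval ((x i)⁻¹) = 0 := by
    intro i
    have hPPsum : ∑ j ∈ Finset.range (n+1),
        pcoef (a + ↑m) (c - a + ↑n - 1) n j * (x i)^j = 0 := by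
      have h := hxroot i
      unfold PP at h
      rw [Polynomial.eval_finset_sum] at h
      simpa using h
    rw [hQ, Polynomial.eval_finset_sum]
    simp only [Polynomial.eval_mul, Polynomial.eval_C, Polynomial.eval_pow, Polynomial.eval_X]
    rw [← Finset.sum_range_reflect]
    simp only [Nat.add_sub_cancel]
    have : ∀ j ∈ Finset.range (n+1),
        K * pcoef (a + ↑m) (c - a + ↑n - 1) n (n - (n - j)) * ((x i)⁻¹)^(n - j)
          = (K * ((x i)⁻¹)^n) * (pcoef (a + ↑m) (c - a + ↑n - 1) n j * (x i)^j) := by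
      intro j hj
      rw [Finset.mem_range] at hj
      rw [show n - (n - j) = j by omega,
        pow_sub₀ _ (inv_ne_zero (hxne i)) (by omega : j ≤ n), inv_pow, inv_pow, inv_inv]
      ring
    rw [Finset.sum_congr rfl this, ← Finset.mul_sum, hPPsum, mul_zero]
  -- the finset of roots
  have hxinvinj : Function.Injective (fun i : Fin n => (x i)⁻¹) := by
    intro i j h
    exact hxmono.injective (inv_injective h)
  set S : Finset ℝ := Finset.image (fun i : Fin n => (x i)⁻¹) Finset.univ with hSdef
  have hScard : S.card = n := by
    rw [hSdef, Finset.card_image_of_injective _ hxinvinj, Finset.card_univ, Fintype.card_fin]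
  have hSmem : ∀ r ∈ S, r ∈ Set.Ioi (1:ℝ) := by
    intro r hr
    rw [hSdef, Finset.mem_image] at hr
    obtain ⟨i, _, rfl⟩ := hr
    exact (one_lt_inv₀ (hxmem i).1).2 (hxmem i).2
  have hSroot : ∀ r ∈ S, Q.IsRoot r := by
    intro r hr
    rw [hSdef, Finset.mem_image] at hr
    obtain ⟨i, _, rfl⟩ := hr
    exact hQroot i
  have hSval_le : S.val ≤ Q.roots := by
    rw [Multiset.le_iff_count]
    intro r
    by_cases hr : r ∈ S
    · rw [Multiset.count_eq_one_of_mem S.nodup hr]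
      exact Multiset.one_le_count_iff_mem.2 ((Polynomial.mem_roots hQne).2 (hSroot r hr))
    · rw [Multiset.count_eq_zero.2 (fun hmem => hr hmem)]
      exact Nat.zero_le _
  have hroots : Q.roots = S.val := by
    refine (Multiset.eq_of_le_of_card_le hSval_le ?_).symm
    have h1 : Multiset.card Q.roots ≤ n := by
      rw [← hdeg]
      exact Q.card_roots'
    have h2 : Multiset.card S.val = n := hScard
    omega
  have hsplits : Polynomial.Splits Q := by
    rw [Polynomial.splits_iff_card_roots, hroots]
    rw [hdeg]
    exact hScard
  refine ⟨S, hScard, hSmem, ?_⟩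
  rw [hsplits.roots_map, hroots]
  simp [Complex.coe_algebraMap]
end

section
/- Let a, c be real numbers with c > a > 0 and let m, n be positive integers with m ≥ n - 1. Then the polynomial Q_{mn}(z) = ₂F₁(-n, -a-m; -c-m-n+1; z) has no zeros in the closed unit disc |z| ≤ 1; in particular |Q_{mn}(z)| > 0 for every complex z with |z| < 1. -/
/-- The denominator polynomial `Q_{mn}(z) = ₂F₁(-n, -a-m; -c-m-n+1; z)` of the
`[m/n]` Padé approximant for `₂F₁(a, 1; c; z)`, as a function of a complex variable. -/
noncomputable def padeDenomFun (m n : ℕ) (a c : ℝ) (z : ℂ) : ℂ :=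
  ∑ k ∈ Finset.range (n + 1),
    (((poch (-(n : ℝ)) k * poch (-a - m) k) /
        (poch (-c - m - n + 1) k * (Nat.factorial k)) : ℝ) : ℂ) * z ^ k

open Polynomial Finset MeasureTheory intervalIntegral Set

noncomputable def cseq (a c : ℝ) (m n : ℕ) (k : ℕ) : ℝ :=
  (poch (-(n : ℝ)) k * poch (-a - m) k) / (poch (-c - m - n + 1) k * (Nat.factorial k))

lemma alt_sum_zero : ∀ n : ℕ, 0 < n → ∀ p : ℝ[X], p.natDegree < n →
    ∑ k ∈ range (n + 1), (-1 : ℝ) ^ k * (n.choose k : ℝ) * p.eval (k : ℝ) = 0 := by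
  intro n
  induction n with
  | zero => intro h; exact absurd h (lt_irrefl 0)
  | succ n ih =>
    intro _ p hp
    rcases Nat.eq_zero_or_pos n with hn0 | hn0
    · subst hn0
      obtain ⟨cc, hc⟩ := Polynomial.natDegree_eq_zero.mp (Nat.lt_one_iff.mp hp)
      rw [← hc]
      simp [Finset.sum_range_succ]
    · set q : ℝ[X] := p.comp (X + C 1) with hq
      have hqeval : ∀ x : ℝ, q.eval x = p.eval (x + 1) := by
        intro x; simp [hq]
      have hA : ∑ k ∈ range (n + 2), (-1 : ℝ) ^ k * ((n+1).choose k : ℝ) * p.eval (k : ℝ)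
          = ∑ k ∈ range (n + 1), (-1 : ℝ) ^ k * (n.choose k : ℝ) * p.eval (k : ℝ)
            - ∑ k ∈ range (n + 1), (-1 : ℝ) ^ k * (n.choose k : ℝ) * q.eval (k : ℝ) := by
        rw [Finset.sum_range_succ' (fun k => (-1 : ℝ) ^ k * ((n+1).choose k : ℝ) * p.eval (k : ℝ))]
        have e1 : ∀ k ∈ range (n+1),
            (-1 : ℝ) ^ (k+1) * ((n+1).choose (k+1) : ℝ) * p.eval ((k+1 : ℕ) : ℝ)
            = -((-1 : ℝ) ^ k * (n.choose k : ℝ) * q.eval (k : ℝ))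
              + (-1 : ℝ) ^ (k+1) * (n.choose (k+1) : ℝ) * p.eval ((k+1 : ℕ) : ℝ) := by
          intro k _
          rw [Nat.choose_succ_succ', hqeval]
          push_cast
          ring
        rw [Finset.sum_congr rfl e1, Finset.sum_add_distrib]
        have e2 : ∑ k ∈ range (n+1), (-1 : ℝ) ^ (k+1) * (n.choose (k+1) : ℝ) * p.eval ((k+1 : ℕ) : ℝ)
            = ∑ k ∈ range (n+2), (-1 : ℝ) ^ k * (n.choose k : ℝ) * p.eval (k : ℝ)
              - (-1 : ℝ) ^ 0 * (n.choose 0 : ℝ) * p.eval ((0:ℕ) : ℝ) := by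
          rw [Finset.sum_range_succ' (fun k => (-1 : ℝ) ^ k * (n.choose k : ℝ) * p.eval (k : ℝ))]
          ring
        rw [e2, Finset.sum_range_succ (fun k => (-1 : ℝ) ^ k * (n.choose k : ℝ) * p.eval (k : ℝ)),
          Nat.choose_succ_self]
        rw [Finset.sum_neg_distrib]
        simp only [Nat.choose_zero_right, Nat.cast_one]
        push_cast
        ring
      rw [hA]
      rcases eq_or_ne p q with hpq | hpq
      · rw [← hpq]; ring
      · have hsub : (p - q).natDegree < n := by
          rcases Nat.eq_zero_or_pos p.natDegree with hd0 | hd0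
          · exfalso
            obtain ⟨cc, hc⟩ := Polynomial.natDegree_eq_zero.mp hd0
            apply hpq
            rw [← hc, hq, ← hc]
            simp
          · have hp0 : p ≠ 0 := fun h => by simp [h] at hd0
            have hndq : q.natDegree = p.natDegree := by
              rw [hq, Polynomial.natDegree_comp, Polynomial.natDegree_X_add_C, mul_one]
            have hlc : p.leadingCoeff = q.leadingCoeff := by
              rw [hq, Polynomial.leadingCoeff_comp (by rw [Polynomial.natDegree_X_add_C]; exact one_ne_zero)]
              rw [(Polynomial.monic_X_add_C (1:ℝ)).leadingCoeff, one_pow, mul_one]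
            have hq0 : q ≠ 0 := by
              intro h
              rw [h] at hndq
              simp only [Polynomial.natDegree_zero] at hndq
              omega
            have hdeq : p.degree = q.degree := by
              rw [Polynomial.degree_eq_natDegree hp0, Polynomial.degree_eq_natDegree hq0, hndq]
            have hdlt := Polynomial.degree_sub_lt hdeq hp0 hlc
            have : (p - q).natDegree < p.natDegree :=
              Polynomial.natDegree_lt_natDegree (sub_ne_zero.mpr hpq)
                ((Polynomial.degree_eq_natDegree hp0) ▸ hdlt)
            omega
        have := ih hn0 (p - q) hsub
        rw [← this]
        rw [← Finset.sum_sub_distrib]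
        apply Finset.sum_congr rfl
        intro k _
        simp only [Polynomial.eval_sub]
        ring

lemma complex_beta_eq (s b : ℝ) (t : ℝ) (ht : t ∈ Set.Ioc (0:ℝ) 1) :
    (t:ℂ) ^ ((s+1 : ℝ) - 1 : ℂ) * (1 - (t:ℂ)) ^ ((b+1 : ℝ) - 1 : ℂ)
      = ((t ^ s * (1 - t) ^ b : ℝ) : ℂ) := by
  have h1 : ((s+1 : ℝ) : ℂ) - 1 = ((s : ℝ) : ℂ) := by push_cast; ring
  have h2 : ((b+1 : ℝ) : ℂ) - 1 = ((b : ℝ) : ℂ) := by push_cast; ring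
  rw [h1, h2, ← Complex.ofReal_cpow ht.1.le, ← Complex.ofReal_one, ← Complex.ofReal_sub,
    ← Complex.ofReal_cpow (by linarith [ht.2] : (0:ℝ) ≤ 1 - t)]
  push_cast
  ring

lemma betaInt_integrable {s b : ℝ} (hs : -1 < s) (hb : -1 < b) :
    IntervalIntegrable (fun t : ℝ => t ^ s * (1 - t) ^ b) volume 0 1 := by
  have hu : 0 < Complex.re ((s + 1 : ℝ) : ℂ) := by simpa using by linarith
  have hv : 0 < Complex.re ((b + 1 : ℝ) : ℂ) := by simpa using by linarith
  have hc := Complex.betaIntegral_convergent hu hv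
  rw [intervalIntegrable_iff_integrableOn_Ioc_of_le (by norm_num : (0:ℝ) ≤ 1)] at hc ⊢
  have heq : (fun x : ℝ => ((x:ℂ) ^ (((s+1:ℝ):ℂ) - 1) * (1 - (x:ℂ)) ^ (((b+1:ℝ):ℂ) - 1)).re)
      =ᵐ[volume.restrict (Ioc 0 1)] (fun t => t ^ s * (1 - t) ^ b) := by
    refine (ae_restrict_iff' measurableSet_Ioc).mpr (ae_of_all _ fun t ht => ?_)
    simp only
    rw [complex_beta_eq s b t ht, Complex.ofReal_re]
  exact hc.re.congr heq

lemma betaInt_value {s b : ℝ} (hs : -1 < s) (hb : -1 < b) :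
    ∫ t in (0:ℝ)..1, t ^ s * (1 - t) ^ b
      = Real.Gamma (s+1) * Real.Gamma (b+1) / Real.Gamma (s+b+2) := by
  have hu : 0 < Complex.re ((s + 1 : ℝ) : ℂ) := by simpa using by linarith
  have hv : 0 < Complex.re ((b + 1 : ℝ) : ℂ) := by simpa using by linarith
  have hG := Complex.Gamma_mul_Gamma_eq_betaIntegral hu hv
  have hne : Complex.Gamma (((s+1 : ℝ) : ℂ) + ((b+1 : ℝ) : ℂ)) ≠ 0 := by
    apply Complex.Gamma_ne_zero_of_re_pos
    simp only [Complex.add_re, Complex.ofReal_re]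
    linarith
  have hbeta : Complex.betaIntegral ((s+1 : ℝ) : ℂ) ((b+1 : ℝ) : ℂ)
      = ((∫ t in (0:ℝ)..1, t ^ s * (1 - t) ^ b : ℝ) : ℂ) := by
    rw [Complex.betaIntegral, ← intervalIntegral.integral_ofReal]
    apply intervalIntegral.integral_congr_ae
    refine (ae_of_all _ fun t ht => ?_)
    have ht' : t ∈ Set.Ioc (0:ℝ) 1 := by
      rwa [Set.uIoc_of_le (by norm_num : (0:ℝ) ≤ 1)] at ht
    exact complex_beta_eq s b t ht'
  rw [hbeta] at hG
  have h2 : ((s+1 : ℝ) : ℂ) + ((b+1 : ℝ) : ℂ) = ((s+b+2 : ℝ) : ℂ) := by push_cast; ring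
  rw [h2] at hG
  have : ((∫ t in (0:ℝ)..1, t ^ s * (1 - t) ^ b : ℝ) : ℂ)
      = ((Real.Gamma (s+1) : ℝ) : ℂ) * ((Real.Gamma (b+1) : ℝ) : ℂ) / ((Real.Gamma (s+b+2) : ℝ) : ℂ) := by
    simp only [← Complex.Gamma_ofReal]
    rw [h2] at hne
    rw [eq_div_iff hne, hG]
    ring
  rw [← Complex.ofReal_mul, ← Complex.ofReal_div] at this
  exact_mod_cast this

lemma gamma_prod : ∀ (k : ℕ) (z : ℝ), 0 < z - k →
    Real.Gamma z = Real.Gamma (z - k) * ∏ i ∈ range k, (z - 1 - i) := by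
  intro k
  induction k with
  | zero => intro z _; simp
  | succ k ih =>
    intro z hz
    have hk : 0 < z - k := by
      have : ((k+1:ℕ):ℝ) = k + 1 := by push_cast; ring
      rw [this] at hz
      linarith
    rw [ih z hk, Finset.prod_range_succ]
    have hne : z - ((k+1:ℕ):ℝ) ≠ 0 := ne_of_gt hz
    have : Real.Gamma (z - k) = (z - 1 - k) * Real.Gamma (z - 1 - k) := by
      have h2 : z - (k:ℝ) = (z - 1 - k) + 1 := by ring
      rw [h2, Real.Gamma_add_one]
      intro h
      apply hne
      push_cast
      linarith [h]
    rw [this]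
    have h3 : z - ((k+1:ℕ):ℝ) = z - 1 - k := by push_cast; ring
    rw [h3]
    ring

lemma integral_pos_poly {al be : ℝ} (hal : -1 < al) (hbe : -1 < be)
    (bint : IntervalIntegrable (fun t : ℝ => t ^ al * (1 - t) ^ be) volume 0 1)
    (p : ℝ[X]) (hp : p ≠ 0) (hnonneg : ∀ t ∈ Set.Icc (0:ℝ) 1, 0 ≤ p.eval t) :
    0 < ∫ t in (0:ℝ)..1, p.eval t * (t ^ al * (1 - t) ^ be) := by
  rw [intervalIntegral.integral_of_le (by norm_num : (0:ℝ) ≤ 1)]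
  have hint : IntegrableOn (fun t : ℝ => p.eval t * (t ^ al * (1 - t) ^ be)) (Ioc 0 1) volume := by
    have := bint.continuousOn_mul (Polynomial.continuous_aeval p).continuousOn
    rw [intervalIntegrable_iff_integrableOn_Ioc_of_le (by norm_num : (0:ℝ) ≤ 1)] at this
    simpa using this
  rw [MeasureTheory.setIntegral_pos_iff_support_of_nonneg_ae ?h1 hint]
  case h1 =>
    refine (ae_restrict_iff' measurableSet_Ioc).mpr (ae_of_all _ fun t ht => ?_)
    have h1 : 0 ≤ p.eval t := hnonneg t ⟨ht.1.le, ht.2⟩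
    have h2 : (0:ℝ) ≤ t ^ al := Real.rpow_nonneg ht.1.le al
    have h3 : (0:ℝ) ≤ (1-t) ^ be := Real.rpow_nonneg (by linarith [ht.2]) be
    positivity
  · have hsub : Set.Ioo (0:ℝ) 1 \ {t | p.IsRoot t} ⊆
        Function.support (fun t : ℝ => p.eval t * (t ^ al * (1 - t) ^ be)) ∩ Ioc 0 1 := by
      intro t ⟨ht, hroot⟩
      constructor
      · have h2 : (0:ℝ) < t ^ al := Real.rpow_pos_of_pos ht.1 al
        have h3 : (0:ℝ) < (1-t) ^ be := Real.rpow_pos_of_pos (by linarith [ht.2]) be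
        have h1 : p.eval t ≠ 0 := hroot
        simp only [Function.mem_support]
        positivity
      · exact ⟨ht.1, ht.2.le⟩
    refine lt_of_lt_of_le ?_ (measure_mono hsub)
    have : volume (Set.Ioo (0:ℝ) 1 \ {t | p.IsRoot t}) = volume (Set.Ioo (0:ℝ) 1) := by
      apply measure_diff_null
      exact Set.Finite.measure_zero (p.finite_setOf_isRoot hp) volume
    rw [this, Real.volume_Ioo]
    norm_num



lemma neg_prod_form (f : ℕ → ℝ) (k : ℕ) :
    ∏ i ∈ range k, (-(f i)) = (-1 : ℝ) ^ k * ∏ i ∈ range k, f i := by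
  rw [show (fun i => -(f i)) = fun i => (-1) * f i by funext i; ring]
  rw [Finset.prod_mul_distrib, Finset.prod_const, Finset.card_range]

lemma descProd (n k : ℕ) (hk : k ≤ n) :
    ∏ i ∈ range k, ((n : ℝ) - i) = (Nat.factorial k * n.choose k : ℕ) := by
  rw [← Nat.descFactorial_eq_factorial_mul_choose, Nat.descFactorial_eq_prod_range, Nat.cast_prod]
  apply Finset.prod_congr rfl
  intro i hi
  rw [Nat.cast_sub (le_trans (Finset.mem_range.mp hi).le hk)]

lemma cform (a c : ℝ) (m n k : ℕ) (hk : k ≤ n)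
    (hV : (∏ i ∈ range k, (c + m + n - 1 - (i:ℝ))) ≠ 0) :
    cseq a c m n k = (-1 : ℝ) ^ k * (n.choose k : ℝ) * (∏ i ∈ range k, (a + m - (i:ℝ)))
      / (∏ i ∈ range k, (c + m + n - 1 - (i:ℝ))) := by
  have h1 : poch (-(n : ℝ)) k = (-1 : ℝ) ^ k * (Nat.factorial k * n.choose k : ℕ) := by
    rw [poch, show (fun i : ℕ => (-(n:ℝ) + i)) = fun i : ℕ => -((n:ℝ) - i) by funext i; ring]
    rw [neg_prod_form, descProd n k hk]
  have h2 : poch (-a - m) k = (-1 : ℝ) ^ k * ∏ i ∈ range k, (a + m - (i:ℝ)) := by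
    rw [poch, show (fun i : ℕ => (-a - m + i)) = fun i : ℕ => -(a + m - (i:ℝ)) by funext i; ring]
    rw [neg_prod_form]
  have h3 : poch (-c - m - n + 1) k = (-1 : ℝ) ^ k * ∏ i ∈ range k, (c + m + n - 1 - (i:ℝ)) := by
    rw [poch, show (fun i : ℕ => (-c - m - n + 1 + i)) = fun i : ℕ => -(c + m + n - 1 - (i:ℝ)) by
      funext i; ring]
    rw [neg_prod_form]
  have hsq : ((-1 : ℝ)) ^ k * ((-1 : ℝ)) ^ k = 1 := by rw [← mul_pow]; norm_num
  have hfac : (Nat.factorial k : ℝ) ≠ 0 := Nat.cast_ne_zero.mpr (Nat.factorial_ne_zero k)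
  have hm1 : ((-1 : ℝ)) ^ k ≠ 0 := pow_ne_zero k (by norm_num)
  rw [cseq, h1, h2, h3]
  rw [div_eq_div_iff (mul_ne_zero (mul_ne_zero hm1 hV) hfac) hV]
  push_cast
  ring

lemma sum_cseq_ratio_zero (a c : ℝ) (ha : 0 < a) (hca : a < c) (m n j : ℕ)
    (hn : 0 < n) (hmn : n ≤ m + 1) (hj : j < n)
    (ALT : ∀ p : ℝ[X], p.natDegree < n →
      ∑ k ∈ range (n + 1), (-1 : ℝ) ^ k * (n.choose k : ℝ) * p.eval (k : ℝ) = 0) :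
    ∑ k ∈ range (n + 1), cseq a c m n k *
      ((∏ i ∈ range k, (c + m + j - (i:ℝ))) / (∏ i ∈ range k, (a + m + j - (i:ℝ)))) = 0 := by
  have hnm : (n : ℝ) ≤ (m : ℝ) + 1 := by exact_mod_cast hmn
  -- positivity of all linear factors
  have hfx : ∀ i : ℕ, i < n → 0 < a + m - (i:ℝ) := by
    intro i hi
    have : (i : ℝ) + 1 ≤ n := by exact_mod_cast hi
    linarith
  have hfv : ∀ i : ℕ, i < n → 0 < c + m + n - 1 - (i:ℝ) := by
    intro i hi
    have : (i : ℝ) + 1 ≤ n := by exact_mod_cast hi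
    linarith
  have hfxj : ∀ i : ℕ, i < n → 0 < a + m + j - (i:ℝ) := by
    intro i hi
    have : (i : ℝ) + 1 ≤ n := by exact_mod_cast hi
    have : (0:ℝ) ≤ j := Nat.cast_nonneg j
    linarith [hfx i hi]
  have hfyj : ∀ i : ℕ, i < n → 0 < c + m + j - (i:ℝ) := by
    intro i hi
    have : (i : ℝ) + 1 ≤ n := by exact_mod_cast hi
    have : (0:ℝ) ≤ j := Nat.cast_nonneg j
    linarith
  have hVpos : ∀ k ≤ n, 0 < ∏ i ∈ range k, (c + m + n - 1 - (i:ℝ)) :=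
    fun k hk => Finset.prod_pos (fun i hi => hfv i (lt_of_lt_of_le (Finset.mem_range.mp hi) hk))
  have hXjpos : ∀ k ≤ n, 0 < ∏ i ∈ range k, (a + m + j - (i:ℝ)) :=
    fun k hk => Finset.prod_pos (fun i hi => hfxj i (lt_of_lt_of_le (Finset.mem_range.mp hi) hk))
  -- the auxiliary polynomial-valued product g
  set gX : ℕ → ℝ := fun k => ∏ l ∈ range j, (a + m + l + 1 - (k:ℝ)) with hgX
  set gY : ℕ → ℝ := fun k => ∏ l ∈ range (n - 1 - j), (c + m + j + 1 + l - (k:ℝ)) with hgY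
  have hg0pos : 0 < gX 0 * gY 0 := by
    rw [hgX, hgY]
    simp only [Nat.cast_zero, sub_zero]
    apply mul_pos
    · apply Finset.prod_pos; intro l _
      have : (0:ℝ) ≤ l := Nat.cast_nonneg l
      positivity
    · apply Finset.prod_pos; intro l _
      have h1 : (0:ℝ) ≤ l := Nat.cast_nonneg l
      have h2 : (0:ℝ) ≤ j := Nat.cast_nonneg j
      linarith
  -- shift identities
  have sX : ∀ k : ℕ, gX (k+1) * (a + m + j - (k:ℝ)) = (a + m - (k:ℝ)) * gX k := by
    intro k
    have e1 : gX (k+1) = ∏ l ∈ range j, (a + m + l - (k:ℝ)) := by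
      rw [hgX]
      apply Finset.prod_congr rfl
      intro l _
      push_cast
      ring
    have e2 : (∏ l ∈ range j, (a + m + l - (k:ℝ))) * (a + m + (j:ℝ) - k)
        = ∏ l ∈ range (j+1), (a + m + l - (k:ℝ)) := by
      rw [Finset.prod_range_succ]
    have e3 : ∏ l ∈ range (j+1), (a + m + l - (k:ℝ))
        = (a + m - (k:ℝ)) * ∏ l ∈ range j, (a + m + l + 1 - (k:ℝ)) := by
      rw [Finset.prod_range_succ']
      have hc : ∀ l ∈ range j, (a + m + ((l+1:ℕ):ℝ) - k) = a + m + l + 1 - (k:ℝ) := by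
        intro l _; push_cast; ring
      rw [Finset.prod_congr rfl hc]
      push_cast
      ring
    calc gX (k+1) * (a + m + j - (k:ℝ))
        = (∏ l ∈ range j, (a + m + l - (k:ℝ))) * (a + m + (j:ℝ) - k) := by rw [e1]
      _ = ∏ l ∈ range (j+1), (a + m + l - (k:ℝ)) := e2
      _ = (a + m - (k:ℝ)) * gX k := by rw [e3, hgX]
  have sY : ∀ k : ℕ, gY (k+1) * (c + m + n - 1 - (k:ℝ)) = (c + m + j - (k:ℝ)) * gY k := by
    intro k
    have hjn : ((n - 1 - j : ℕ) : ℝ) = (n:ℝ) - 1 - j := by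
      have h1 : j + 1 ≤ n := hj
      push_cast [Nat.cast_sub (by omega : 1 ≤ n), Nat.cast_sub (by omega : j ≤ n - 1)]
      ring
    have e1 : gY (k+1) = ∏ l ∈ range (n-1-j), (c + m + j + l - (k:ℝ)) := by
      rw [hgY]
      apply Finset.prod_congr rfl
      intro l _
      push_cast
      ring
    have e2 : (∏ l ∈ range (n-1-j), (c + m + j + l - (k:ℝ))) * (c + m + n - 1 - (k:ℝ))
        = ∏ l ∈ range (n-1-j+1), (c + m + j + l - (k:ℝ)) := by
      rw [Finset.prod_range_succ, hjn]
      ring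
    have e3 : ∏ l ∈ range (n-1-j+1), (c + m + j + l - (k:ℝ))
        = (c + m + j - (k:ℝ)) * ∏ l ∈ range (n-1-j), (c + m + j + 1 + l - (k:ℝ)) := by
      rw [Finset.prod_range_succ']
      have hc : ∀ l ∈ range (n-1-j), (c + m + j + ((l+1:ℕ):ℝ) - k) = c + m + j + 1 + l - (k:ℝ) := by
        intro l _; push_cast; ring
      rw [Finset.prod_congr rfl hc]
      push_cast
      ring
    calc gY (k+1) * (c + m + n - 1 - (k:ℝ))
        = (∏ l ∈ range (n-1-j), (c + m + j + l - (k:ℝ))) * (c + m + n - 1 - (k:ℝ)) := by rw [e1]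
      _ = ∏ l ∈ range (n-1-j+1), (c + m + j + l - (k:ℝ)) := e2
      _ = (c + m + j - (k:ℝ)) * gY k := by rw [e3, hgY]
  -- KEY1 by induction
  have key1 : ∀ k, k ≤ n →
      (∏ i ∈ range k, (a + m - (i:ℝ))) * (∏ i ∈ range k, (c + m + j - (i:ℝ))) * (gX 0 * gY 0)
      = (gX k * gY k) * (∏ i ∈ range k, (c + m + n - 1 - (i:ℝ)))
          * (∏ i ∈ range k, (a + m + j - (i:ℝ))) := by
    intro k
    induction k with
    | zero => intro _; simp
    | succ k ih =>
      intro hk1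
      have hk : k ≤ n := by omega
      have ihh := ih hk
      have shift : (gX (k+1) * gY (k+1)) * ((a + m + j - (k:ℝ)) * (c + m + n - 1 - (k:ℝ)))
          = (gX k * gY k) * ((a + m - (k:ℝ)) * (c + m + j - (k:ℝ))) := by
        have h1 := sX k
        have h2 := sY k
        calc (gX (k+1) * gY (k+1)) * ((a + m + j - (k:ℝ)) * (c + m + n - 1 - (k:ℝ)))
            = (gX (k+1) * (a + m + j - (k:ℝ))) * (gY (k+1) * (c + m + n - 1 - (k:ℝ))) := by ring
          _ = ((a + m - (k:ℝ)) * gX k) * ((c + m + j - (k:ℝ)) * gY k) := by rw [h1, h2]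
          _ = (gX k * gY k) * ((a + m - (k:ℝ)) * (c + m + j - (k:ℝ))) := by ring
      rw [Finset.prod_range_succ, Finset.prod_range_succ, Finset.prod_range_succ,
        Finset.prod_range_succ]
      linear_combination ((a + m - (k:ℝ)) * (c + m + j - (k:ℝ))) * ihh
        - ((∏ i ∈ range k, (c + m + n - 1 - (i:ℝ))) * (∏ i ∈ range k, (a + m + j - (i:ℝ)))) * shift
  -- the polynomial for ALT
  set G : ℝ[X] := (∏ l ∈ range j, (C (a + m + (l:ℝ) + 1) - X))
      * (∏ l ∈ range (n - 1 - j), (C (c + m + (j:ℝ) + 1 + l) - X)) with hG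
  have hGdeg : G.natDegree < n := by
    have d1 : (∏ l ∈ range j, (C (a + m + (l:ℝ) + 1) - X)).natDegree ≤ j := by
      refine le_trans (Polynomial.natDegree_prod_le _ _) ?_
      refine le_trans (Finset.sum_le_card_nsmul _ _ 1 ?_) (by simp)
      intro l _
      refine le_trans (Polynomial.natDegree_sub_le _ _) ?_
      simp only [Polynomial.natDegree_C, Polynomial.natDegree_X]
      omega
    have d2 : (∏ l ∈ range (n-1-j), (C (c + m + (j:ℝ) + 1 + l) - X)).natDegree ≤ n - 1 - j := by
      refine le_trans (Polynomial.natDegree_prod_le _ _) ?_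
      refine le_trans (Finset.sum_le_card_nsmul _ _ 1 ?_) (by simp)
      intro l _
      refine le_trans (Polynomial.natDegree_sub_le _ _) ?_
      simp only [Polynomial.natDegree_C, Polynomial.natDegree_X]
      omega
    refine lt_of_le_of_lt (le_trans (Polynomial.natDegree_mul_le) (add_le_add d1 d2)) ?_
    omega
  have hGeval : ∀ k : ℕ, G.eval (k:ℝ) = gX k * gY k := by
    intro k
    rw [hG, hgX, hgY]
    simp [Polynomial.eval_prod]
  -- rewrite each summand
  have hsummand : ∀ k ∈ range (n+1), cseq a c m n k *
      ((∏ i ∈ range k, (c + m + j - (i:ℝ))) / (∏ i ∈ range k, (a + m + j - (i:ℝ))))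
      = ((-1 : ℝ) ^ k * (n.choose k : ℝ) * G.eval (k:ℝ)) / (gX 0 * gY 0) := by
    intro k hk
    have hkn : k ≤ n := by
      have := Finset.mem_range.mp hk; omega
    have hV := hVpos k hkn
    have hXj := hXjpos k hkn
    rw [cform a c m n k hkn hV.ne', hGeval k, div_mul_div_comm]
    rw [div_eq_div_iff (by positivity) hg0pos.ne']
    linear_combination ((-1 : ℝ) ^ k * (n.choose k : ℝ)) * key1 k hkn
  rw [Finset.sum_congr rfl hsummand, ← Finset.sum_div]
  have : ∑ k ∈ range (n+1), (-1 : ℝ) ^ k * (n.choose k : ℝ) * G.eval (k:ℝ) = 0 := ALT G hGdeg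
  rw [this, zero_div]



lemma orth (a c : ℝ) (ha : 0 < a) (hca : a < c) (m n : ℕ) (hn : 0 < n) (hmn : n ≤ m + 1)
    (j : ℕ) (hj : j < n) :
    ∫ t in (0:ℝ)..1, (∑ k ∈ range (n + 1), cseq a c m n k * t ^ (n - k + j))
      * (t ^ (a + m - n : ℝ) * (1 - t) ^ (c - a - 1)) = 0 := by
  have hnm : (n : ℝ) ≤ (m : ℝ) + 1 := by exact_mod_cast hmn
  set al : ℝ := a + m - n with hal'
  set be : ℝ := c - a - 1 with hbe'
  have hal : -1 < al := by rw [hal']; linarith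
  have hbe : -1 < be := by rw [hbe']; linarith
  have bint := betaInt_integrable hal hbe
  have hint : ∀ k ∈ range (n+1), IntervalIntegrable
      (fun t : ℝ => cseq a c m n k * (t ^ (n - k + j) * (t ^ al * (1-t) ^ be))) volume 0 1 := by
    intro k _
    have h1 : IntervalIntegrable (fun t : ℝ => t ^ (n - k + j) * (t ^ al * (1-t) ^ be))
        volume 0 1 := bint.continuousOn_mul (continuousOn_pow _)
    exact h1.const_mul _
  have e0 : Set.EqOn
      (fun t : ℝ => (∑ k ∈ range (n + 1), cseq a c m n k * t ^ (n - k + j))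
        * (t ^ al * (1 - t) ^ be))
      (fun t : ℝ => ∑ k ∈ range (n + 1),
        cseq a c m n k * (t ^ (n - k + j) * (t ^ al * (1-t) ^ be)))
      (Set.uIcc 0 1) := by
    intro t _
    simp only [Finset.sum_mul]
    apply Finset.sum_congr rfl
    intro k _
    ring
  rw [intervalIntegral.integral_congr e0, intervalIntegral.integral_finset_sum hint]
  -- value of each integral
  have hval : ∀ k ∈ range (n+1),
      (∫ t in (0:ℝ)..1, cseq a c m n k * (t ^ (n - k + j) * (t ^ al * (1-t) ^ be)))
      = cseq a c m n k * (Real.Gamma (al + (n-k+j : ℕ) + 1) * Real.Gamma (be+1)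
          / Real.Gamma (al + (n-k+j : ℕ) + be + 2)) := by
    intro k _
    rw [intervalIntegral.integral_const_mul]
    congr 1
    have hcongr : ∀ᵐ t ∂(volume : Measure ℝ), t ∈ Set.uIoc (0:ℝ) 1 →
        t ^ (n - k + j) * (t ^ al * (1-t) ^ be) = t ^ (al + (n-k+j : ℕ)) * (1-t) ^ be := by
      refine ae_of_all _ fun t ht => ?_
      rw [Set.uIoc_of_le (by norm_num : (0:ℝ) ≤ 1)] at ht
      rw [Real.rpow_add ht.1, ← Real.rpow_natCast t (n-k+j)]
      ring
    rw [intervalIntegral.integral_congr_ae hcongr,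
      betaInt_value (by have : (0:ℝ) ≤ ((n-k+j : ℕ):ℝ) := Nat.cast_nonneg _; linarith) hbe]
  rw [Finset.sum_congr rfl hval]
  -- rewrite the Gamma ratios
  set x0 : ℝ := a + m + j + 1 with hx0
  set y0 : ℝ := c + m + j + 1 with hy0
  have hjn : (j : ℝ) ≤ (n : ℝ) - 1 := by
    have : (j:ℝ) + 1 ≤ n := by exact_mod_cast hj
    linarith
  have hx0k : ∀ k : ℕ, k ≤ n → 0 < x0 - k := by
    intro k hk
    have : (k : ℝ) ≤ n := by exact_mod_cast hk
    have hjj : (0:ℝ) ≤ j := Nat.cast_nonneg j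
    rw [hx0]; linarith
  have hy0k : ∀ k : ℕ, k ≤ n → 0 < y0 - k := by
    intro k hk
    have : (k : ℝ) ≤ n := by exact_mod_cast hk
    have hjj : (0:ℝ) ≤ j := Nat.cast_nonneg j
    rw [hy0]; linarith
  have hpXpos : ∀ k ≤ n, 0 < ∏ i ∈ range k, (a + m + j - (i:ℝ)) := by
    intro k hk
    apply Finset.prod_pos
    intro i hi
    have h1 : (i:ℝ) + 1 ≤ n := by exact_mod_cast lt_of_lt_of_le (Finset.mem_range.mp hi) hk
    have hjj : (0:ℝ) ≤ j := Nat.cast_nonneg j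
    linarith
  have hpYpos : ∀ k ≤ n, 0 < ∏ i ∈ range k, (c + m + j - (i:ℝ)) := by
    intro k hk
    apply Finset.prod_pos
    intro i hi
    have h1 : (i:ℝ) + 1 ≤ n := by exact_mod_cast lt_of_lt_of_le (Finset.mem_range.mp hi) hk
    have hjj : (0:ℝ) ≤ j := Nat.cast_nonneg j
    linarith
  have hgx : ∀ k ≤ n, Real.Gamma (x0 - k) = Real.Gamma x0 / ∏ i ∈ range k, (a + m + j - (i:ℝ)) := by
    intro k hk
    rw [eq_div_iff (hpXpos k hk).ne']
    have := gamma_prod k x0 (hx0k k hk)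
    rw [this]
    congr 1
    apply Finset.prod_congr rfl
    intro i _
    rw [hx0]; ring
  have hgy : ∀ k ≤ n, Real.Gamma (y0 - k) = Real.Gamma y0 / ∏ i ∈ range k, (c + m + j - (i:ℝ)) := by
    intro k hk
    rw [eq_div_iff (hpYpos k hk).ne']
    have := gamma_prod k y0 (hy0k k hk)
    rw [this]
    congr 1
    apply Finset.prod_congr rfl
    intro i _
    rw [hy0]; ring
  have hterm : ∀ k ∈ range (n+1),
      cseq a c m n k * (Real.Gamma (al + (n-k+j : ℕ) + 1) * Real.Gamma (be+1)
          / Real.Gamma (al + (n-k+j : ℕ) + be + 2))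
      = (Real.Gamma x0 * Real.Gamma (be+1) / Real.Gamma y0) *
          (cseq a c m n k *
            ((∏ i ∈ range k, (c + m + j - (i:ℝ))) / (∏ i ∈ range k, (a + m + j - (i:ℝ))))) := by
    intro k hk
    have hkn : k ≤ n := by have := Finset.mem_range.mp hk; omega
    have hcast : ((n - k + j : ℕ) : ℝ) = (n:ℝ) - k + j := by
      push_cast [Nat.cast_sub hkn]
      ring
    have h1 : al + (n-k+j : ℕ) + 1 = x0 - k := by rw [hcast, hal', hx0]; ring
    have h2 : al + (n-k+j : ℕ) + be + 2 = y0 - k := by rw [hcast, hal', hbe', hy0]; ring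
    rw [h1, h2, hgx k hkn, hgy k hkn]
    have hGy0 : Real.Gamma y0 ≠ 0 := by
      have : (0:ℝ) < y0 := by
        have := hy0k 0 (by omega); simpa using this
      exact (Real.Gamma_pos_of_pos this).ne'
    field_simp
  rw [Finset.sum_congr rfl hterm, ← Finset.mul_sum,
    sum_cseq_ratio_zero a c ha hca m n j hn hmn hj (alt_sum_zero n hn), mul_zero]



lemma orth2 (a c : ℝ) (ha : 0 < a) (hca : a < c) (m n : ℕ) (hn : 0 < n) (hmn : n ≤ m + 1)
    (S : ℝ[X]) (hS : S.natDegree < n) :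
    ∫ t in (0:ℝ)..1, (∑ k ∈ range (n + 1), cseq a c m n k * t ^ (n - k)) * S.eval t
      * (t ^ (a + m - n : ℝ) * (1 - t) ^ (c - a - 1)) = 0 := by
  have hnm : (n : ℝ) ≤ (m : ℝ) + 1 := by exact_mod_cast hmn
  have hal : (-1:ℝ) < a + m - n := by linarith
  have hbe : (-1:ℝ) < c - a - 1 := by linarith
  have bint := betaInt_integrable hal hbe
  have e : Set.EqOn
      (fun t : ℝ => (∑ k ∈ range (n + 1), cseq a c m n k * t ^ (n - k)) * S.eval t
        * (t ^ (a + m - n : ℝ) * (1 - t) ^ (c - a - 1)))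
      (fun t : ℝ => ∑ i ∈ range (S.natDegree + 1), S.coeff i *
        ((∑ k ∈ range (n + 1), cseq a c m n k * t ^ (n - k + i))
          * (t ^ (a + m - n : ℝ) * (1 - t) ^ (c - a - 1)))) (Set.uIcc 0 1) := by
    intro t _
    simp only
    rw [Polynomial.eval_eq_sum_range, Finset.mul_sum, Finset.sum_mul]
    apply Finset.sum_congr rfl
    intro i _
    have hin : (∑ k ∈ range (n + 1), cseq a c m n k * t ^ (n - k + i))
        = (∑ k ∈ range (n + 1), cseq a c m n k * t ^ (n - k)) * t ^ i := by
      rw [Finset.sum_mul]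
      apply Finset.sum_congr rfl
      intro k _
      rw [pow_add]
      ring
    rw [hin]
    ring
  rw [intervalIntegral.integral_congr e]
  have hint : ∀ i ∈ range (S.natDegree + 1), IntervalIntegrable
      (fun t : ℝ => S.coeff i * ((∑ k ∈ range (n + 1), cseq a c m n k * t ^ (n - k + i))
        * (t ^ (a + m - n : ℝ) * (1 - t) ^ (c - a - 1)))) volume 0 1 := by
    intro i _
    have hcont : Continuous (fun t : ℝ => ∑ k ∈ range (n + 1), cseq a c m n k * t ^ (n - k + i)) := by
      apply continuous_finset_sum
      intro k _
      exact continuous_const.mul (continuous_pow _)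
    exact (bint.continuousOn_mul hcont.continuousOn).const_mul _
  rw [intervalIntegral.integral_finset_sum hint]
  apply Finset.sum_eq_zero
  intro i hi
  rw [intervalIntegral.integral_const_mul,
    orth a c ha hca m n hn hmn i (by have := Finset.mem_range.mp hi; omega), mul_zero]

lemma cseq_zero (a c : ℝ) (m n : ℕ) : cseq a c m n 0 = 1 := by
  simp [cseq, poch]

lemma root_loc (a c : ℝ) (ha : 0 < a) (hca : a < c) (m n : ℕ) (hn : 0 < n) (hmn : n ≤ m + 1)
    (w : ℂ) (hw : 1 ≤ ‖w‖) :
    Polynomial.eval w (∑ k ∈ range (n + 1),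
      Polynomial.C ((cseq a c m n k : ℝ) : ℂ) * Polynomial.X ^ (n - k)) ≠ 0 := by
  intro hroot
  have hnm : (n : ℝ) ≤ (m : ℝ) + 1 := by exact_mod_cast hmn
  have hal : (-1:ℝ) < a + m - n := by linarith
  have hbe : (-1:ℝ) < c - a - 1 := by linarith
  have bint := betaInt_integrable hal hbe
  set W : ℝ → ℝ := fun t => t ^ (a + m - n : ℝ) * (1 - t) ^ (c - a - 1) with hW
  set Pc : ℂ[X] := ∑ k ∈ range (n + 1),
      Polynomial.C ((cseq a c m n k : ℝ) : ℂ) * Polynomial.X ^ (n - k) with hPc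
  set Preal : ℝ → ℝ := fun t => ∑ k ∈ range (n + 1), cseq a c m n k * t ^ (n - k) with hPreal
  -- Pc is nonzero
  have hcoeffn : Pc.coeff n = 1 := by
    rw [hPc, Polynomial.finset_sum_coeff]
    rw [Finset.sum_eq_single 0]
    · simp [Polynomial.coeff_C_mul, Polynomial.coeff_X_pow, cseq_zero]
    · intro k hk hk0
      have hkn : k ≤ n := by have := Finset.mem_range.mp hk; omega
      rw [Polynomial.coeff_C_mul, Polynomial.coeff_X_pow, if_neg (by omega), mul_zero]
    · intro h
      exact absurd (Finset.mem_range.mpr (by omega)) h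
  have hPc0 : Pc ≠ 0 := fun h => by simp [h] at hcoeffn
  have hPcdeg : Pc.natDegree ≤ n := by
    rw [hPc]
    apply Polynomial.natDegree_sum_le_of_forall_le
    intro k _
    refine le_trans (Polynomial.natDegree_C_mul_le _ _) ?_
    rw [Polynomial.natDegree_X_pow]
    omega
  -- factor out the root
  set R : ℂ[X] := Pc /ₘ (Polynomial.X - Polynomial.C w) with hR
  have hfac : (Polynomial.X - Polynomial.C w) * R = Pc :=
    (Polynomial.mul_divByMonic_eq_iff_isRoot).mpr hroot
  have hR0 : R ≠ 0 := by
    intro h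
    rw [h, mul_zero] at hfac
    exact hPc0 hfac.symm
  have hRdeg : R.natDegree < n := by
    have h1 : (Polynomial.X - Polynomial.C w).natDegree = 1 := Polynomial.natDegree_X_sub_C w
    have h2 := Polynomial.natDegree_mul (Polynomial.X_sub_C_ne_zero w) hR0
    rw [hfac, h1] at h2
    omega
  -- real and imaginary part polynomials
  set R1 : ℝ[X] := ∑ k ∈ range (R.natDegree + 1),
      Polynomial.C ((R.coeff k).re) * Polynomial.X ^ k with hR1
  set R2 : ℝ[X] := ∑ k ∈ range (R.natDegree + 1),
      Polynomial.C ((R.coeff k).im) * Polynomial.X ^ k with hR2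
  have hR1deg : R1.natDegree < n := by
    rw [hR1]
    refine lt_of_le_of_lt (Polynomial.natDegree_sum_le_of_forall_le _ _ ?_) hRdeg
    intro k hk
    refine le_trans (Polynomial.natDegree_C_mul_le _ _) ?_
    rw [Polynomial.natDegree_X_pow]
    have := Finset.mem_range.mp hk; omega
  have hR2deg : R2.natDegree < n := by
    rw [hR2]
    refine lt_of_le_of_lt (Polynomial.natDegree_sum_le_of_forall_le _ _ ?_) hRdeg
    intro k hk
    refine le_trans (Polynomial.natDegree_C_mul_le _ _) ?_
    rw [Polynomial.natDegree_X_pow]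
    have := Finset.mem_range.mp hk; omega
  have hR1eval : ∀ t : ℝ, R1.eval t = ∑ k ∈ range (R.natDegree + 1), (R.coeff k).re * t ^ k := by
    intro t
    rw [hR1, Polynomial.eval_finset_sum]
    simp
  have hR2eval : ∀ t : ℝ, R2.eval t = ∑ k ∈ range (R.natDegree + 1), (R.coeff k).im * t ^ k := by
    intro t
    rw [hR2, Polynomial.eval_finset_sum]
    simp
  have heval : ∀ t : ℝ, R.eval ((t : ℝ) : ℂ)
      = ((R1.eval t : ℝ) : ℂ) + Complex.I * ((R2.eval t : ℝ) : ℂ) := by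
    intro t
    rw [Polynomial.eval_eq_sum_range, hR1eval, hR2eval]
    push_cast
    rw [Finset.mul_sum, ← Finset.sum_add_distrib]
    apply Finset.sum_congr rfl
    intro k _
    have hc := Complex.re_add_im (R.coeff k)
    linear_combination (-((t:ℂ) ^ k)) * hc
  have hPt : ∀ t : ℝ, ((Preal t : ℝ) : ℂ)
      = ((t : ℂ) - w) * (((R1.eval t : ℝ) : ℂ) + Complex.I * ((R2.eval t : ℝ) : ℂ)) := by
    intro t
    have h1 : Polynomial.eval ((t:ℝ):ℂ) Pc = ((Preal t : ℝ) : ℂ) := by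
      rw [hPc, hPreal, Polynomial.eval_finset_sum]
      push_cast
      apply Finset.sum_congr rfl
      intro k _
      simp
    have h2 := congrArg (Polynomial.eval ((t:ℝ):ℂ)) hfac
    rw [Polynomial.eval_mul, Polynomial.eval_sub, Polynomial.eval_X, Polynomial.eval_C, h1,
      heval t] at h2
    exact h2.symm
  set x : ℝ := w.re with hx
  set y : ℝ := w.im with hy
  have hwxy : w = (x : ℂ) + (y : ℂ) * Complex.I := (Complex.re_add_im w).symm
  have hkey : ∀ t : ℝ, ((Preal t : ℝ) : ℂ)
      = (((t - x) * R1.eval t + y * R2.eval t : ℝ) : ℂ)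
        + Complex.I * (((t - x) * R2.eval t - y * R1.eval t : ℝ) : ℂ) := by
    intro t
    rw [hPt t, hwxy]
    push_cast
    ring_nf
    rw [Complex.I_sq]
    ring
  have Pt1 : ∀ t : ℝ, Preal t = (t - x) * R1.eval t + y * R2.eval t := by
    intro t
    have := congrArg Complex.re (hkey t)
    simpa using this
  have Pt2 : ∀ t : ℝ, 0 = (t - x) * R2.eval t - y * R1.eval t := by
    intro t
    have := congrArg Complex.im (hkey t)
    simpa using this
  -- the square-sum polynomial
  set Gp : ℝ[X] := R1 * R1 + R2 * R2 with hGp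
  have hGp0 : Gp ≠ 0 := by
    intro h0
    apply hR0
    apply Polynomial.eq_zero_of_infinite_isRoot
    apply Set.Infinite.mono ?_ (Set.infinite_range_of_injective Complex.ofReal_injective)
    rintro z ⟨t, rfl⟩
    have h1 : R1.eval t * R1.eval t + R2.eval t * R2.eval t = 0 := by
      have h2 := congrArg (Polynomial.eval t) h0
      rw [hGp] at h2
      simpa using h2
    have hn1 := mul_self_nonneg (R1.eval t)
    have hn2 := mul_self_nonneg (R2.eval t)
    have e1 : R1.eval t = 0 := mul_self_eq_zero.mp (by linarith)
    have e2 : R2.eval t = 0 := mul_self_eq_zero.mp (by linarith)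
    show R.IsRoot _
    rw [Polynomial.IsRoot, heval t, e1, e2]
    simp
  have hGpev : ∀ t : ℝ, Gp.eval t = R1.eval t * R1.eval t + R2.eval t * R2.eval t := by
    intro t; rw [hGp]; simp
  have hGpnn : ∀ t : ℝ, 0 ≤ Gp.eval t := by
    intro t; rw [hGpev]; nlinarith [mul_self_nonneg (R1.eval t), mul_self_nonneg (R2.eval t)]
  have hM0 : 0 < ∫ t in (0:ℝ)..1, Gp.eval t * W t :=
    integral_pos_poly hal hbe bint Gp hGp0 (fun t _ => hGpnn t)
  -- y = 0
  have hy0 : y = 0 := by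
    have E2 := orth2 a c ha hca m n hn hmn R2 hR2deg
    have e : Set.EqOn
        (fun t : ℝ => (∑ k ∈ range (n + 1), cseq a c m n k * t ^ (n - k)) * R2.eval t
          * (t ^ (a + m - n : ℝ) * (1 - t) ^ (c - a - 1)))
        (fun t : ℝ => y * (Gp.eval t * W t)) (Set.uIcc 0 1) := by
      intro t _
      show Preal t * R2.eval t * (W t) = y * (Gp.eval t * W t)
      have : Preal t * R2.eval t = y * Gp.eval t := by
        rw [hGpev]
        linear_combination (R2.eval t) * (Pt1 t) - (R1.eval t) * (Pt2 t)
      calc Preal t * R2.eval t * W t = (Preal t * R2.eval t) * W t := by ring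
        _ = (y * Gp.eval t) * W t := by rw [this]
        _ = y * (Gp.eval t * W t) := by ring
    rw [intervalIntegral.integral_congr e, intervalIntegral.integral_const_mul] at E2
    rcases mul_eq_zero.mp E2 with h | h
    · exact h
    · exact absurd h hM0.ne'
  -- x ∈ [0, 1)
  have Pt1' : ∀ t : ℝ, Preal t = (t - x) * R1.eval t := by
    intro t; rw [Pt1 t, hy0]; ring
  have Pt2' : ∀ t : ℝ, (t - x) * R2.eval t = 0 := by
    intro t
    have := Pt2 t
    rw [hy0] at this
    linarith
  have hpint : ∀ p : ℝ[X], IntervalIntegrable (fun t => p.eval t * W t) volume 0 1 := by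
    intro p
    have := bint.continuousOn_mul (Polynomial.continuous p).continuousOn
    exact this
  have hMT : (∫ t in (0:ℝ)..1, (Polynomial.X * Gp).eval t * W t)
      - x * (∫ t in (0:ℝ)..1, Gp.eval t * W t) = 0 := by
    have E1 := orth2 a c ha hca m n hn hmn R1 hR1deg
    have e : Set.EqOn
        (fun t : ℝ => (∑ k ∈ range (n + 1), cseq a c m n k * t ^ (n - k)) * R1.eval t
          * (t ^ (a + m - n : ℝ) * (1 - t) ^ (c - a - 1)))
        (fun t : ℝ => (Polynomial.X * Gp).eval t * W t - x * (Gp.eval t * W t)) (Set.uIcc 0 1) := by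
      intro t _
      show Preal t * R1.eval t * (W t) = (Polynomial.X * Gp).eval t * W t - x * (Gp.eval t * W t)
      simp only [Polynomial.eval_mul, Polynomial.eval_X]
      have : Preal t * R1.eval t = (t - x) * Gp.eval t := by
        rw [hGpev]
        linear_combination (R1.eval t) * (Pt1' t) - (R2.eval t) * (Pt2' t)
      calc Preal t * R1.eval t * W t = (Preal t * R1.eval t) * W t := by ring
        _ = ((t - x) * Gp.eval t) * W t := by rw [this]
        _ = t * Gp.eval t * W t - x * (Gp.eval t * W t) := by ring
    rw [intervalIntegral.integral_congr e] at E1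
    rw [intervalIntegral.integral_sub (hpint (Polynomial.X * Gp))
      ((hpint Gp).const_mul x), intervalIntegral.integral_const_mul] at E1
    exact E1
  have hMTnn : 0 ≤ ∫ t in (0:ℝ)..1, (Polynomial.X * Gp).eval t * W t := by
    apply intervalIntegral.integral_nonneg (by norm_num : (0:ℝ) ≤ 1)
    intro u hu
    have h1 : 0 ≤ u := hu.1
    have h2 : u ≤ 1 := hu.2
    have h3 : 0 ≤ W u := by
      rw [hW]
      have := Real.rpow_nonneg h1 (a + m - n : ℝ)
      have := Real.rpow_nonneg (by linarith : (0:ℝ) ≤ 1 - u) (c - a - 1)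
      positivity
    simp only [Polynomial.eval_mul, Polynomial.eval_X]
    have := hGpnn u
    positivity
  have hdiff : 0 < (∫ t in (0:ℝ)..1, Gp.eval t * W t)
      - (∫ t in (0:ℝ)..1, (Polynomial.X * Gp).eval t * W t) := by
    have h1X : (1 - Polynomial.X : ℝ[X]) ≠ 0 := fun h => by
      simpa [Polynomial.coeff_one] using congrArg (fun q : ℝ[X] => Polynomial.coeff q 1) h
    have hp : ((1 - Polynomial.X) * Gp : ℝ[X]) ≠ 0 := mul_ne_zero h1X hGp0
    have hnn : ∀ t ∈ Set.Icc (0:ℝ) 1, 0 ≤ ((1 - Polynomial.X) * Gp).eval t := by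
      intro t ht
      simp only [Polynomial.eval_mul, Polynomial.eval_sub, Polynomial.eval_one, Polynomial.eval_X]
      have := hGpnn t
      have h2 : (0:ℝ) ≤ 1 - t := by linarith [ht.2]
      positivity
    have hpos := integral_pos_poly hal hbe bint _ hp hnn
    have e : Set.EqOn
        (fun t : ℝ => ((1 - Polynomial.X) * Gp).eval t * (t ^ (a + m - n : ℝ) * (1 - t) ^ (c - a - 1)))
        (fun t : ℝ => Gp.eval t * W t - (Polynomial.X * Gp).eval t * W t) (Set.uIcc 0 1) := by
      intro t _
      show ((1 - Polynomial.X) * Gp).eval t * (W t) = Gp.eval t * W t - (Polynomial.X * Gp).eval t * W t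
      simp only [Polynomial.eval_mul, Polynomial.eval_sub, Polynomial.eval_one, Polynomial.eval_X]
      ring
    rw [intervalIntegral.integral_congr e,
      intervalIntegral.integral_sub (hpint Gp) (hpint (Polynomial.X * Gp))] at hpos
    exact hpos
  -- conclude
  have hx0 : 0 ≤ x := by nlinarith [hM0, hMTnn, hMT]
  have hx1 : x < 1 := by nlinarith [hM0, hdiff, hMT]
  have habs : ‖w‖ = |x| := by
    rw [hwxy, hy0]
    simp
  rw [abs_of_nonneg hx0] at habs
  rw [habs] at hw
  linarith

/-- For `c > a > 0` and `m ≥ n - 1`, the Padé denominator `Q_{mn}` has no zeros in the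
closed unit disc `|z| ≤ 1`; in particular `|Q_{mn}(z)| > 0` for every `z` with `|z| < 1`. -/
theorem pade_denominator_nonzero_on_disc (a c : ℝ) (ha : 0 < a) (hca : a < c)
    (m n : ℕ) (hm : 0 < m) (hn : 0 < n) (hmn : n - 1 ≤ m) :
    (∀ z : ℂ, ‖z‖ ≤ 1 → padeDenomFun m n a c z ≠ 0) ∧
    (∀ z : ℂ, ‖z‖ < 1 → 0 < ‖padeDenomFun m n a c z‖) := by
  have hmn' : n ≤ m + 1 := by omega
  have h1 : ∀ z : ℂ, ‖z‖ ≤ 1 → padeDenomFun m n a c z ≠ 0 := by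
    intro z hz h0
    have h0' : (∑ k ∈ Finset.range (n+1), ((cseq a c m n k : ℝ) : ℂ) * z ^ k) = 0 := h0
    by_cases hz0 : z = 0
    · subst hz0
      rw [Finset.sum_eq_single 0] at h0'
      · rw [cseq_zero] at h0'
        simp at h0'
      · intro k _ hk0
        rw [zero_pow hk0, mul_zero]
      · intro h
        exact absurd (Finset.mem_range.mpr (by omega)) h
    · set w : ℂ := z⁻¹ with hwdef
      have habsz : 0 < ‖z‖ := norm_pos_iff.mpr hz0
      have hwabs : 1 ≤ ‖w‖ := by
        rw [hwdef, norm_inv]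
        rw [le_inv_comm₀ one_pos habsz]
        simpa using hz
      apply root_loc a c ha hca m n hn hmn' w hwabs
      have heval : Polynomial.eval w (∑ k ∈ range (n + 1),
          Polynomial.C ((cseq a c m n k : ℝ) : ℂ) * Polynomial.X ^ (n - k))
          = ∑ k ∈ range (n + 1), ((cseq a c m n k : ℝ) : ℂ) * w ^ (n - k) := by
        rw [Polynomial.eval_finset_sum]
        simp
      have key : z ^ n * (∑ k ∈ range (n + 1), ((cseq a c m n k : ℝ) : ℂ) * w ^ (n - k))
          = ∑ k ∈ range (n + 1), ((cseq a c m n k : ℝ) : ℂ) * z ^ k := by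
        rw [Finset.mul_sum]
        apply Finset.sum_congr rfl
        intro k hk
        have hkn : k ≤ n := by have := Finset.mem_range.mp hk; omega
        have hzz : z ^ n = z ^ (n - k) * z ^ k := by
          rw [← pow_add]
          congr 1
          omega
        calc z ^ n * (((cseq a c m n k : ℝ) : ℂ) * w ^ (n - k))
            = ((cseq a c m n k : ℝ) : ℂ) * z ^ k * (z ^ (n-k) * (z ^ (n-k))⁻¹) := by
              rw [hzz, hwdef, inv_pow]; ring
          _ = ((cseq a c m n k : ℝ) : ℂ) * z ^ k := by
              rw [mul_inv_cancel₀ (pow_ne_zero _ hz0), mul_one]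
      have hz2 : z ^ n * Polynomial.eval w (∑ k ∈ range (n + 1),
          Polynomial.C ((cseq a c m n k : ℝ) : ℂ) * Polynomial.X ^ (n - k)) = 0 := by
        rw [heval, key, h0']
      exact (mul_eq_zero.mp hz2).resolve_left (pow_ne_zero n hz0)
  refine ⟨h1, fun z hz => norm_pos_iff.mpr (h1 z hz.le)⟩
end

section
/- Let a, c be real numbers with c > 0, and let m, n be positive integers with m ≥ n - 1. Define Q_{mn}(z) = ₂F₁(-n, -a-m; -c-m-n+1; z), define P_{mn}(z) = Σ_{r=0}^m p_r z^r with p_r = Σ_{l=0}^r (a)_{r-l} (-n)_l (-a-m)_l / ((-c-m-n+1)_l (c)_{r-l} l!), and define S_{mn} = n! (a)_{m+1} (c-a)_n / ((c)_{m+n} (c+m)_{n+1}). Then for every complex z with |z| < 1, Q_{mn}(z) · ₂F₁(a, 1; c; z) − P_{mn}(z) = S_{mn} · z^{m+n+1} · ₂F₁(a+m+1, n+1; c+m+n+1; z). -/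
/-- The Gauss hypergeometric series `₂F₁(a, b; c; z)` with real parameters, for a
complex argument `z` (convergent for `|z| < 1`). -/
noncomputable def hyp2F1 (a b c : ℝ) (z : ℂ) : ℂ :=
  ∑' k : ℕ, (((poch a k * poch b k) / (poch c k * (Nat.factorial k)) : ℝ) : ℂ) * z ^ k

/-- The coefficients of the numerator polynomial `P_{mn}` of the `[m/n]` Padé
approximant for `₂F₁(a, 1; c; z)`. -/
noncomputable def padeNumCoeff (m n : ℕ) (a c : ℝ) (r : ℕ) : ℝ :=
  ∑ l ∈ Finset.range (r + 1),
    (poch a (r - l) * poch (-(n : ℝ)) l * poch (-a - m) l) /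
      (poch (-c - m - n + 1) l * poch c (r - l) * (Nat.factorial l))

/-- The numerator polynomial `P_{mn}(z)` of the `[m/n]` Padé approximant for
`₂F₁(a, 1; c; z)`, as a function of a complex variable. -/
noncomputable def padeNumFun (m n : ℕ) (a c : ℝ) (z : ℂ) : ℂ :=
  ∑ r ∈ Finset.range (m + 1), ((padeNumCoeff m n a c r : ℝ) : ℂ) * z ^ r

/-- The constant `S_{mn} = n! (a)_{m+1} (c-a)_n / ((c)_{m+n} (c+m)_{n+1})`. -/
noncomputable def padeS (m n : ℕ) (a c : ℝ) : ℝ :=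
  (Nat.factorial n) * poch a (m + 1) * poch (c - a) n /
    (poch c (m + n) * poch (c + m) (n + 1))

open Filter Topology

lemma poch_zero (x : ℝ) : poch x 0 = 1 := by simp [poch]

lemma poch_succ (x : ℝ) (k : ℕ) : poch x (k + 1) = poch x k * (x + k) := by
  simp [poch, Finset.prod_range_succ]

lemma poch_one (x : ℝ) : poch x 1 = x := by simp [poch]

lemma poch_add (x : ℝ) (i j : ℕ) : poch x (i + j) = poch x i * poch (x + i) j := by
  induction j with
  | zero => simp [poch_zero]
  | succ j ih =>
    rw [← Nat.add_assoc, poch_succ, ih, poch_succ, mul_assoc]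
    push_cast; ring_nf

lemma poch_pos {x : ℝ} (hx : 0 < x) (k : ℕ) : 0 < poch x k := by
  refine Finset.prod_pos fun i _ => by positivity

lemma poch_ne_zero {x : ℝ} (hx : 0 < x) (k : ℕ) : poch x k ≠ 0 := (poch_pos hx k).ne'

/-- Reflection: `poch x k = (-1)^k poch (-x-k+1) k`. -/
lemma poch_reflect (x : ℝ) (k : ℕ) : poch x k = (-1) ^ k * poch (-x - k + 1) k := by
  rw [poch, poch, ← Finset.prod_range_reflect (fun i => x + i) k]
  rw [show ((-1 : ℝ)) ^ k = ∏ _i ∈ Finset.range k, (-1 : ℝ) by simp, ← Finset.prod_mul_distrib]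
  refine Finset.prod_congr rfl fun i hi => ?_
  rw [Finset.mem_range] at hi
  have : ((k - 1 - i : ℕ) : ℝ) = (k : ℝ) - 1 - i := by
    have h1 : i ≤ k - 1 := Nat.le_sub_one_of_lt hi
    have hk : 1 ≤ k := by omega
    rw [Nat.cast_sub h1, Nat.cast_sub hk]
    push_cast; ring
  rw [this]; ring

lemma poch_one_eq_factorial (k : ℕ) : poch 1 k = k.factorial := by
  induction k with
  | zero => simp [poch_zero]
  | succ k ih => rw [poch_succ, ih, Nat.factorial_succ]; push_cast; ring

/-- `poch (-n) l = 0` for `l > n`. -/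
lemma poch_neg_nat_eq_zero {n l : ℕ} (h : n < l) : poch (-(n : ℝ)) l = 0 := by
  refine Finset.prod_eq_zero (Finset.mem_range.2 h) ?_
  simp

lemma poch_neg_nat {n l : ℕ} (h : l ≤ n) :
    poch (-(n : ℝ)) l = (-1) ^ l * (n.choose l) * l.factorial := by
  induction l with
  | zero => simp [poch_zero]
  | succ l ih =>
    have hl : l ≤ n := Nat.le_of_succ_le h
    rw [poch_succ, ih hl, Nat.factorial_succ]
    have hch : ((n.choose (l+1) : ℝ)) * (l+1) = (n.choose l) * (n - l) := by
      have := Nat.add_one_mul_choose_eq n l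
      have h2 : (n.choose (l+1)) * (l+1) = n.choose l * (n - l) := by
        rw [Nat.choose_succ_right_eq]
      calc ((n.choose (l+1) : ℝ)) * (l+1) = ((n.choose (l+1) * (l+1) : ℕ) : ℝ) := by push_cast; ring
        _ = ((n.choose l * (n - l) : ℕ) : ℝ) := by rw [h2]
        _ = (n.choose l) * (n - l) := by push_cast [Nat.cast_sub hl]; ring
    push_cast
    push_cast at hch
    linear_combination ((-1:ℝ) ^ l * (l.factorial : ℝ)) * hch

/-- Chu–Vandermonde for rising factorials (polynomial form). -/
lemma poch_vandermonde (k : ℕ) (p q : ℝ) :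
    poch (p + q) k = ∑ j ∈ Finset.range (k + 1), (k.choose j : ℝ) * poch p j * poch q (k - j) := by
  induction k with
  | zero => simp [poch_zero]
  | succ k ih =>
    have key : ∀ j ∈ Finset.range (k + 1),
        (k.choose j : ℝ) * poch p j * poch q (k - j) * (p + q + k)
          = (k.choose j : ℝ) * poch p (j + 1) * poch q (k - j)
            + (k.choose j : ℝ) * poch p j * poch q ((k - j) + 1) := by
      intro j hj
      rw [Finset.mem_range] at hj
      have hjk : j ≤ k := by omega
      rw [poch_succ, poch_succ]
      have hc : ((k - j : ℕ) : ℝ) = (k : ℝ) - j := by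
        rw [Nat.cast_sub hjk]
      rw [hc]; ring
    have hA : poch (p + q) (k + 1)
        = (∑ j ∈ Finset.range (k + 1), (k.choose j : ℝ) * poch p (j + 1) * poch q (k - j))
          + ∑ j ∈ Finset.range (k + 1), (k.choose j : ℝ) * poch p j * poch q ((k - j) + 1) := by
      rw [poch_succ, ih, Finset.sum_mul, Finset.sum_congr rfl key, Finset.sum_add_distrib]
    rw [hA]
    -- now compute the RHS
    rw [Finset.sum_range_succ' (fun j => ((k + 1).choose j : ℝ) * poch p j * poch q (k + 1 - j))]
    simp only [Nat.succ_sub_succ, Nat.choose_succ_succ, Nat.choose_zero_right, Nat.cast_add,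
      Nat.cast_one, poch_zero, Nat.sub_zero]
    rw [show (∑ j ∈ Finset.range (k + 1),
          ((k.choose j : ℝ) + (k.choose (j + 1) : ℝ)) * poch p (j + 1) * poch q (k - j))
        = (∑ j ∈ Finset.range (k + 1), (k.choose j : ℝ) * poch p (j + 1) * poch q (k - j))
          + ∑ j ∈ Finset.range (k + 1), (k.choose (j + 1) : ℝ) * poch p (j + 1) * poch q (k - j)
      from by rw [← Finset.sum_add_distrib]; exact Finset.sum_congr rfl fun j _ => by ring]
    -- second piece equals B minus its first term
    have hB : ∑ j ∈ Finset.range (k + 1), (k.choose j : ℝ) * poch p j * poch q ((k - j) + 1)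
        = (∑ j ∈ Finset.range k, (k.choose (j + 1) : ℝ) * poch p (j + 1) * poch q (k - j))
          + poch q (k + 1) := by
      rw [Finset.sum_range_succ'
        (fun j => (k.choose j : ℝ) * poch p j * poch q ((k - j) + 1))]
      simp only [Nat.choose_zero_right, Nat.cast_one, poch_zero, Nat.sub_zero]
      congr 1
      · refine Finset.sum_congr rfl fun j hj => ?_
        rw [Finset.mem_range] at hj
        have : k - (j + 1) + 1 = k - j := by omega
        rw [this]
      · ring
    rw [hB]
    have htop : ∑ j ∈ Finset.range (k + 1), (k.choose (j + 1) : ℝ) * poch p (j + 1) * poch q (k - j)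
        = ∑ j ∈ Finset.range k, (k.choose (j + 1) : ℝ) * poch p (j + 1) * poch q (k - j) := by
      rw [Finset.sum_range_succ]
      simp [Nat.choose_succ_self]
    rw [htop]; ring

/-- Saalschütz's theorem in polynomial form. -/
lemma saalschutz_poly (n : ℕ) (x y u : ℝ) :
    ∑ l ∈ Finset.range (n + 1),
        (n.choose l : ℝ) * poch x l * poch y l * poch u (n - l) * poch (x + y + u + l) (n - l)
      = poch (x + u) n * poch (y + u) n := by
  have step1 :
      ∑ l ∈ Finset.range (n + 1),
          (n.choose l : ℝ) * poch x l * poch y l * poch u (n - l) * poch (x + y + u + l) (n - l)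
        = ∑ l ∈ Finset.range (n + 1), ∑ j ∈ Finset.range (n - l + 1),
            (n.choose l : ℝ) * ((n - l).choose j : ℝ) * poch x l * poch y (l + j)
              * poch u (n - l) * poch (x + u) (n - l - j) := by
    refine Finset.sum_congr rfl fun l hl => ?_
    have hxy : x + y + u + (l : ℝ) = (y + l) + (x + u) := by ring
    rw [hxy, poch_vandermonde (n - l) (y + l) (x + u), Finset.mul_sum]
    refine Finset.sum_congr rfl fun j hj => ?_
    rw [poch_add y l j]
    ring
  rw [step1]
  -- reindex (l, j) ↦ (k, i) = (l + j, l)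
  have step2 :
      ∑ l ∈ Finset.range (n + 1), ∑ j ∈ Finset.range (n - l + 1),
          (n.choose l : ℝ) * ((n - l).choose j : ℝ) * poch x l * poch y (l + j)
            * poch u (n - l) * poch (x + u) (n - l - j)
        = ∑ k ∈ Finset.range (n + 1), ∑ i ∈ Finset.range (k + 1),
            (n.choose k : ℝ) * (k.choose i : ℝ) * poch x i * poch y k
              * poch u (n - i) * poch (x + u) (n - k) := by
    rw [Finset.sum_sigma' (Finset.range (n + 1)) (fun l => Finset.range (n - l + 1))]
    rw [Finset.sum_sigma' (Finset.range (n + 1)) (fun k => Finset.range (k + 1))]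
    refine Finset.sum_bij' (fun p _ => ⟨p.1 + p.2, p.1⟩) (fun p _ => ⟨p.2, p.1 - p.2⟩)
      ?_ ?_ ?_ ?_ ?_
    · rintro ⟨l, j⟩ hp
      simp only [Finset.mem_sigma, Finset.mem_range] at hp ⊢
      omega
    · rintro ⟨k, i⟩ hp
      simp only [Finset.mem_sigma, Finset.mem_range] at hp ⊢
      omega
    · rintro ⟨l, j⟩ hp
      simp [Nat.add_sub_cancel_left]
    · rintro ⟨k, i⟩ hp
      simp only [Finset.mem_sigma, Finset.mem_range] at hp
      have h : i + (k - i) = k := by omega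
      simp [h]
    · rintro ⟨l, j⟩ hp
      simp only [Finset.mem_sigma, Finset.mem_range] at hp
      dsimp only
      have h1 : l + j ≤ n := by omega
      have h2 : l ≤ l + j := by omega
      have hch : (n.choose l : ℝ) * ((n - l).choose j : ℝ)
          = (n.choose (l + j) : ℝ) * ((l + j).choose l : ℝ) := by
        have h0 := Nat.choose_mul (n := n) h2
        have h3 : (l + j) - l = j := by omega
        rw [h3] at h0
        exact_mod_cast congrArg (Nat.cast (R := ℝ)) h0.symm
      have h4 : n - l - j = n - (l + j) := by omega
      rw [hch, h4]
  rw [step2]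
  -- inner Vandermonde
  have step3 : ∀ k ∈ Finset.range (n + 1),
      ∑ i ∈ Finset.range (k + 1),
          (n.choose k : ℝ) * (k.choose i : ℝ) * poch x i * poch y k
            * poch u (n - i) * poch (x + u) (n - k)
        = (n.choose k : ℝ) * poch y k * poch u (n - k) * poch (x + u) n := by
    intro k hk
    rw [Finset.mem_range] at hk
    have hkn : k ≤ n := by omega
    have inner : ∑ i ∈ Finset.range (k + 1),
        (k.choose i : ℝ) * poch x i * poch (u + (n - k : ℕ)) (k - i)
        = poch (x + (u + (n - k : ℕ))) k := by
      rw [poch_vandermonde k x (u + (n - k : ℕ))]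
    calc ∑ i ∈ Finset.range (k + 1),
          (n.choose k : ℝ) * (k.choose i : ℝ) * poch x i * poch y k
            * poch u (n - i) * poch (x + u) (n - k)
        = (n.choose k : ℝ) * poch y k * poch u (n - k) * poch (x + u) (n - k)
            * ∑ i ∈ Finset.range (k + 1),
              (k.choose i : ℝ) * poch x i * poch (u + (n - k : ℕ)) (k - i) := by
          rw [Finset.mul_sum]
          refine Finset.sum_congr rfl fun i hi => ?_
          rw [Finset.mem_range] at hi
          have hik : i ≤ k := by omega
          have hsplit : poch u (n - i) = poch u (n - k) * poch (u + (n - k : ℕ)) (k - i) := by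
            have : n - i = (n - k) + (k - i) := by omega
            rw [this, poch_add]
          rw [hsplit]; ring
      _ = (n.choose k : ℝ) * poch y k * poch u (n - k) * poch (x + u) n := by
          rw [inner]
          have : poch (x + u) (n - k) * poch (x + (u + (n - k : ℕ))) k = poch (x + u) n := by
            have h1 : (n - k) + k = n := by omega
            have h2 : x + (u + ((n - k : ℕ) : ℝ)) = (x + u) + ((n - k : ℕ) : ℝ) := by ring
            rw [h2, ← poch_add, h1]
          rw [← this]; ring
  rw [Finset.sum_congr rfl step3]
  -- final Vandermonde
  have : ∑ k ∈ Finset.range (n + 1),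
      (n.choose k : ℝ) * poch y k * poch u (n - k) * poch (x + u) n
      = poch (x + u) n * ∑ k ∈ Finset.range (n + 1), (n.choose k : ℝ) * poch y k * poch u (n - k) := by
    rw [Finset.mul_sum]; exact Finset.sum_congr rfl fun k _ => by ring
  rw [this, ← poch_vandermonde n y u]

/-- Saalschütz in the "reversal" form used for the Padé coefficients. -/
lemma saal_aux (n : ℕ) (A C T : ℝ) :
    ∑ l ∈ Finset.range (n + 1),
        (-1 : ℝ) ^ l * (n.choose l : ℝ) * poch (T - A) l * poch A (n - l)
          * poch (T - C - n + 1 + l) (n - l) * poch (C + (n - l : ℕ)) l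
      = poch (A - C - n + 1) n * poch T n := by
  set g : ℕ → ℝ := fun l =>
    (-1 : ℝ) ^ l * (n.choose l : ℝ) * poch (T - A) l * poch A (n - l)
      * poch (T - C - n + 1 + l) (n - l) * poch (C + (n - l : ℕ)) l with hg
  have hrefl := Finset.sum_range_reflect g (n + 1)
  have key : ∀ j ∈ Finset.range (n + 1),
      g (n + 1 - 1 - j)
        = (-1 : ℝ) ^ n * ((n.choose j : ℝ) * poch A j * poch (C - T) j * poch (T - A) (n - j)
            * poch (A + (C - T) + (T - A) + j) (n - j)) := by
    intro j hj
    rw [Finset.mem_range] at hj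
    have hjn : j ≤ n := by omega
    have h1 : n + 1 - 1 - j = n - j := by omega
    have h2 : n - (n - j) = j := by omega
    have h3 : ((n - j : ℕ) : ℝ) = (n : ℝ) - j := by rw [Nat.cast_sub hjn]
    rw [hg]
    simp only [h1, h2, h3]
    rw [Nat.choose_symm hjn]
    have h4 : T - C - n + 1 + ((n : ℝ) - j) = T - C + 1 - j := by ring
    rw [h4]
    have h5 : poch (T - C + 1 - j) j = (-1) ^ j * poch (C - T) j := by
      rw [poch_reflect (T - C + 1 - j) j]
      congr 2
      ring
    rw [h5]
    have h6 : A + (C - T) + (T - A) + (j : ℝ) = C + j := by ring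
    rw [h6]
    have h7 : (-1 : ℝ) ^ (n - j) * (-1 : ℝ) ^ j = (-1 : ℝ) ^ n := by
      rw [← pow_add]
      congr 1
      omega
    calc (-1 : ℝ) ^ (n - j) * (n.choose j : ℝ) * poch (T - A) (n - j) * poch A j
          * ((-1) ^ j * poch (C - T) j) * poch (C + j) (n - j)
        = ((-1 : ℝ) ^ (n - j) * (-1 : ℝ) ^ j) * ((n.choose j : ℝ) * poch A j * poch (C - T) j
            * poch (T - A) (n - j) * poch (C + j) (n - j)) := by ring
      _ = _ := by rw [h7]
  rw [← hrefl, Finset.sum_congr rfl key, ← Finset.mul_sum, saalschutz_poly n A (C - T) (T - A)]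
  have e1 : A + (T - A) = T := by ring
  have e2 : C - T + (T - A) = C - A := by ring
  rw [e1, e2]
  have e3 : poch (A - C - n + 1) n = (-1) ^ n * poch (C - A) n := by
    rw [poch_reflect (A - C - n + 1) n]
    congr 2
    ring
  rw [e3]
  ring

noncomputable def qcoef (m n : ℕ) (a c : ℝ) (l : ℕ) : ℝ :=
  (poch (-(n : ℝ)) l * poch (-a - m) l) / (poch (-c - m - n + 1) l * (Nat.factorial l))

noncomputable def fcoef (a c : ℝ) (j : ℕ) : ℝ :=
  (poch a j * poch 1 j) / (poch c j * (Nat.factorial j))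

noncomputable def gcoef (m n : ℕ) (a c : ℝ) (r : ℕ) : ℝ :=
  ∑ l ∈ Finset.range (r + 1), qcoef m n a c l * fcoef a c (r - l)

lemma fcoef_eq (a c : ℝ) (j : ℕ) : fcoef a c j = poch a j / poch c j := by
  rw [fcoef, poch_one_eq_factorial, mul_div_mul_right]
  exact_mod_cast j.factorial_ne_zero

/-- nonvanishing of the denominator parameter Pochhammers. -/
lemma poch_low_ne_zero {c : ℝ} (hc : 0 < c) (m n l : ℕ) (hl : l ≤ n) :
    poch (-c - m - n + 1) l ≠ 0 := by
  rw [poch]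
  refine Finset.prod_ne_zero_iff.2 fun i hi => ?_
  rw [Finset.mem_range] at hi
  have hin : (i : ℝ) ≤ (n : ℝ) - 1 := by
    have : i + 1 ≤ n := by omega
    have := Nat.cast_le (α := ℝ).2 this
    push_cast at this
    linarith
  have hm : (0 : ℝ) ≤ m := Nat.cast_nonneg m
  intro h
  nlinarith

lemma poch_low_shift_ne_zero {c : ℝ} (hc : 0 < c) (m n l : ℕ) (hl : l ≤ n) :
    poch (-c - m - n + 1 + l) (n - l) ≠ 0 := by
  rw [poch]
  refine Finset.prod_ne_zero_iff.2 fun i hi => ?_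
  rw [Finset.mem_range] at hi
  have hin : (l : ℝ) + i ≤ (n : ℝ) - 1 := by
    have : l + i + 1 ≤ n := by omega
    have := Nat.cast_le (α := ℝ).2 this
    push_cast at this
    linarith
  have hm : (0 : ℝ) ≤ m := Nat.cast_nonneg m
  intro h
  nlinarith

lemma gcoef_eq_padeNumCoeff (m n : ℕ) (a c : ℝ) (r : ℕ) :
    gcoef m n a c r = padeNumCoeff m n a c r := by
  rw [gcoef, padeNumCoeff]
  refine Finset.sum_congr rfl fun l _ => ?_
  rw [fcoef_eq, qcoef, div_mul_div_comm]
  ring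

lemma qcoef_eq_zero {m n : ℕ} {a c : ℝ} {l : ℕ} (h : n < l) : qcoef m n a c l = 0 := by
  rw [qcoef, poch_neg_nat_eq_zero h, zero_mul, zero_div]

/-- The key closed form for the Cauchy-product coefficients, `n ≤ r`. -/
lemma gcoef_closed {m n : ℕ} {a c : ℝ} (hc : 0 < c) {r : ℕ} (hnr : n ≤ r) :
    gcoef m n a c r
      = poch a (r - n) * poch ((r : ℝ) - m - n) n * poch (c - a) n
          / (poch c r * poch (c + m) n) := by
  classical
  -- truncate the sum
  have htrunc : gcoef m n a c r = ∑ l ∈ Finset.range (n + 1), qcoef m n a c l * fcoef a c (r - l) := by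
    rw [gcoef]
    refine (Finset.sum_subset ?_ ?_).symm
    · intro l hl
      rw [Finset.mem_range] at hl ⊢
      omega
    · intro l _ hl
      rw [Finset.mem_range, not_lt] at hl
      rw [qcoef_eq_zero (by omega), zero_mul]
  set A : ℝ := a + ((r - n : ℕ) : ℝ) with hA
  set C : ℝ := c + ((r - n : ℕ) : ℝ) with hC
  set T : ℝ := (r : ℝ) - m - n with hT
  have hcast : ((r - n : ℕ) : ℝ) = (r : ℝ) - n := by
    rw [Nat.cast_sub hnr]
  have key : ∀ l ∈ Finset.range (n + 1),
      qcoef m n a c l * fcoef a c (r - l)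
        = poch a (r - n)
            * ((-1 : ℝ) ^ l * (n.choose l : ℝ) * poch (T - A) l * poch A (n - l)
              * poch (T - C - n + 1 + l) (n - l) * poch (C + (n - l : ℕ)) l)
            / (poch c r * poch (-c - m - n + 1) n) := by
    intro l hl
    rw [Finset.mem_range] at hl
    have hln : l ≤ n := by omega
    have hlr : l ≤ r := le_trans hln hnr
    -- splits
    have hsplit_cr : poch c r = poch c (r - l) * poch (c + ((r - l : ℕ) : ℝ)) l := by
      rw [← poch_add]
      congr 1
      omega
    have hsplit_low : poch (-c - m - n + 1) n
        = poch (-c - m - n + 1) l * poch (-c - m - n + 1 + l) (n - l) := by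
      rw [← poch_add]
      congr 1
      omega
    have hsplit_a : poch a (r - l) = poch a (r - n) * poch A (n - l) := by
      rw [hA, ← poch_add]
      congr 1
      omega
    -- argument identities
    have hTA : T - A = -a - m := by rw [hT, hA, hcast]; push_cast; ring
    have hTC : T - C - n + 1 + (l : ℝ) = -c - m - n + 1 + l := by
      rw [hT, hC, hcast]; push_cast; ring
    have hCnl : C + ((n - l : ℕ) : ℝ) = c + ((r - l : ℕ) : ℝ) := by
      rw [hC, hcast, Nat.cast_sub hln, Nat.cast_sub hlr]; ring
    rw [fcoef_eq, qcoef, poch_neg_nat hln, hTA, hTC, hCnl, hsplit_cr, hsplit_low, hsplit_a]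
    have h1 : poch c (r - l) ≠ 0 := poch_ne_zero hc _
    have h2 : poch (-c - m - n + 1) l ≠ 0 := poch_low_ne_zero hc m n l hln
    have h3 : (l.factorial : ℝ) ≠ 0 := by exact_mod_cast l.factorial_ne_zero
    have h7 : poch (c + ((r - l : ℕ) : ℝ)) l ≠ 0 := poch_ne_zero (by positivity) l
    have h8 : poch (-c - m - n + 1 + l) (n - l) ≠ 0 := poch_low_shift_ne_zero hc m n l hln
    set p1 := poch (-a - (m : ℝ)) l
    set p2 := poch a (r - n)
    set p3 := poch A (n - l)
    set p4 := poch (-c - (m : ℝ) - n + 1) l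
    set p5 := poch (-c - (m : ℝ) - n + 1 + l) (n - l)
    set p6 := poch c (r - l)
    set p7 := poch (c + ((r - l : ℕ) : ℝ)) l
    field_simp
  rw [htrunc, Finset.sum_congr rfl key, ← Finset.sum_div, ← Finset.mul_sum, saal_aux n A C T]
  -- final cleanup
  have hACn : A - C - n + 1 = a - c - n + 1 := by rw [hA, hC]; ring
  have hrefl1 : poch (a - c - n + 1) n = (-1) ^ n * poch (c - a) n := by
    rw [poch_reflect (a - c - n + 1) n]
    congr 2
    ring
  have hrefl2 : poch (-c - m - n + 1) n = (-1) ^ n * poch (c + m) n := by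
    rw [poch_reflect (-c - m - n + 1) n]
    congr 2
    ring
  rw [hACn, hrefl1, hrefl2]
  have h4 : poch c r ≠ 0 := poch_ne_zero hc r
  have h5 : poch (c + m) n ≠ 0 := poch_ne_zero (by positivity) n
  have h6 : ((-1 : ℝ)) ^ n ≠ 0 := by
    simp
  set e1 := poch a (r - n)
  set e2 := poch (c - a) n
  set e3 := poch T n
  set e4 := poch c r
  set e5 := poch (c + m) n
  rw [div_eq_div_iff (by exact mul_ne_zero h4 (mul_ne_zero h6 h5)) (by exact mul_ne_zero h4 h5)]
  ring

lemma poch_cast_factorial (k n : ℕ) :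
    poch ((k : ℝ) + 1) n * k.factorial = ((k + n).factorial : ℝ) := by
  induction n with
  | zero => simp [poch_zero]
  | succ n ih =>
    rw [poch_succ, show ((k : ℝ) + 1 + n) = ((k + n : ℕ) : ℝ) + 1 by push_cast; ring,
      mul_right_comm, ih, show k + (n + 1) = (k + n) + 1 by omega, Nat.factorial_succ]
    push_cast
    ring

lemma gcoef_vanish {m n : ℕ} {a c : ℝ} (hc : 0 < c) {r : ℕ}
    (hnr : n ≤ r) (h1 : m < r) (h2 : r ≤ m + n) : gcoef m n a c r = 0 := by
  rw [gcoef_closed hc hnr]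
  have : poch ((r : ℝ) - m - n) n = 0 := by
    rw [poch]
    refine Finset.prod_eq_zero (i := m + n - r) (Finset.mem_range.2 (by omega)) ?_
    have : ((m + n - r : ℕ) : ℝ) = (m : ℝ) + n - r := by
      rw [Nat.cast_sub (by omega)]
      push_cast
      ring
    rw [this]
    ring
  rw [this]
  simp

lemma gcoef_tail {m n : ℕ} {a c : ℝ} (hc : 0 < c) (k : ℕ) :
    gcoef m n a c (k + (m + n + 1))
      = padeS m n a c
          * (poch (a + m + 1) k * poch ((n : ℝ) + 1) k
              / (poch (c + m + n + 1) k * k.factorial)) := by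
  have hnr : n ≤ k + (m + n + 1) := by omega
  rw [gcoef_closed hc hnr, padeS]
  -- numerator splits
  have e1 : k + (m + n + 1) - n = (m + 1) + k := by omega
  have e2 : poch a ((m + 1) + k) = poch a (m + 1) * poch (a + m + 1) k := by
    rw [poch_add]
    congr 2
    push_cast
    ring
  have e3 : poch ((k + (m + n + 1) : ℕ) : ℝ) (0) = 1 := poch_zero _  -- dummy
  have e4 : ((k + (m + n + 1) : ℕ) : ℝ) - m - n = (k : ℝ) + 1 := by push_cast; ring
  have e5 : poch ((k : ℝ) + 1) n = poch ((n : ℝ) + 1) k * n.factorial / k.factorial := by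
    rw [eq_div_iff (by exact_mod_cast k.factorial_ne_zero)]
    rw [poch_cast_factorial]
    rw [show ((n : ℝ) + 1) = ((n : ℕ) : ℝ) + 1 by norm_num, poch_cast_factorial]
    norm_cast
    rw [Nat.add_comm]
  -- denominator splits
  have e6 : poch c (k + (m + n + 1)) = poch c (m + n) * (c + m + n) * poch (c + m + n + 1) k := by
    rw [show k + (m + n + 1) = (m + n) + (1 + k) by omega, poch_add c (m + n) (1 + k),
      poch_add (c + ((m + n : ℕ) : ℝ)) 1 k, poch_one]
    push_cast
    ring_nf
  have e7 : poch (c + m) (n + 1) = poch (c + m) n * (c + m + n) := by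
    rw [poch_succ]
  rw [e1, e2, e4, e5, e6, e7]
  have h1 : poch c (m + n) ≠ 0 := poch_ne_zero hc _
  have h2 : poch (c + m) n ≠ 0 := poch_ne_zero (by positivity) _
  have h3 : poch (c + m + n + 1) k ≠ 0 := poch_ne_zero (by positivity) _
  have h4 : (c + m + n) ≠ 0 := by positivity
  have h5 : (k.factorial : ℝ) ≠ 0 := by exact_mod_cast k.factorial_ne_zero
  have h6 : (n.factorial : ℝ) ≠ 0 := by exact_mod_cast n.factorial_ne_zero
  set w1 := poch a (m + 1)
  set w2 := poch (a + m + 1) k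
  set w3 := poch ((n : ℝ) + 1) k
  set w4 := poch (c - a) n
  set w5 := poch c (m + n)
  set w6 := poch (c + m) n
  set w7 := poch (c + m + n + 1) k
  field_simp

lemma poch_eq_zero_mono {x : ℝ} {k j : ℕ} (h : poch x k = 0) (hkj : k ≤ j) : poch x j = 0 := by
  obtain ⟨i, rfl⟩ := Nat.exists_eq_add_of_le hkj
  rw [poch_add, h, zero_mul]

lemma tendsto_ratio_aux (al : ℝ) :
    Tendsto (fun k : ℕ => (al + k) / ((1 : ℝ) + k)) atTop (𝓝 1) := by
  have h : ∀ k : ℕ, (al + k) / ((1 : ℝ) + k) = 1 + (al - 1) * (1 / (k + 1)) := by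
    intro k
    have hk : (1 : ℝ) + k ≠ 0 := by positivity
    field_simp
    ring
  simp_rw [h]
  have := tendsto_one_div_add_atTop_nhds_zero_nat (𝕜 := ℝ)
  have h2 : Tendsto (fun k : ℕ => (al - 1) * (1 / (k + 1) : ℝ)) atTop (𝓝 0) := by
    simpa using this.const_mul (al - 1)
  simpa using tendsto_const_nhds.add h2

lemma tendsto_ratio_aux2 (be ga : ℝ) (hga : 0 < ga) :
    Tendsto (fun k : ℕ => (be + k) / (ga + k)) atTop (𝓝 1) := by
  have hden : Tendsto (fun k : ℕ => ga + (k : ℝ)) atTop atTop :=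
    tendsto_atTop_add_const_left _ _ tendsto_natCast_atTop_atTop
  have hinv : Tendsto (fun k : ℕ => 1 / (ga + (k : ℝ))) atTop (𝓝 0) := by
    simpa [one_div, Pi.inv_def] using hden.inv_tendsto_atTop
  have h : ∀ k : ℕ, (be + k) / (ga + k) = 1 + (be - ga) * (1 / (ga + (k : ℝ))) := by
    intro k
    have hk : ga + (k : ℝ) ≠ 0 := by positivity
    field_simp
    ring
  simp_rw [h]
  simpa using tendsto_const_nhds.add (hinv.const_mul (be - ga))

/-- Summability of hypergeometric series with positive lower parameter, `|z| < 1`. -/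
lemma hyp_summable {al be ga : ℝ} (hga : 0 < ga) {z : ℂ} (hz : ‖z‖ < 1) :
    Summable fun k : ℕ =>
      ‖(((poch al k * poch be k) / (poch ga k * (Nat.factorial k)) : ℝ) : ℂ) * z ^ k‖ := by
  by_cases hnz : ∃ k0 : ℕ, poch al k0 * poch be k0 = 0
  · obtain ⟨k0, hk0⟩ := hnz
    refine summable_of_ne_finset_zero (s := Finset.range k0) fun k hk => ?_
    rw [Finset.mem_range, not_lt] at hk
    have : poch al k * poch be k = 0 := by
      rcases mul_eq_zero.1 hk0 with h | h
      · rw [poch_eq_zero_mono h hk, zero_mul]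
      · rw [poch_eq_zero_mono h hk, mul_zero]
    simp [this]
  · push_neg at hnz
    by_cases hz0 : z = 0
    · refine summable_of_ne_finset_zero (s := Finset.range 1) fun k hk => ?_
      rw [Finset.mem_range, not_lt] at hk
      simp [hz0, zero_pow (by omega : k ≠ 0)]
    · -- ratio test
      set t : ℕ → ℝ := fun k => poch al k * poch be k / (poch ga k * (Nat.factorial k)) with ht
      have htne : ∀ k, t k ≠ 0 := by
        intro k
        have hd : poch ga k * (Nat.factorial k : ℝ) ≠ 0 :=
          mul_ne_zero (poch_ne_zero hga k) (by exact_mod_cast k.factorial_ne_zero)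
        exact div_ne_zero (hnz k) hd
      set f : ℕ → ℂ := fun k => ((t k : ℝ) : ℂ) * z ^ k with hf
      have hfne : ∀ k, f k ≠ 0 := fun k =>
        mul_ne_zero (by exact_mod_cast Complex.ofReal_ne_zero.2 (htne k)) (pow_ne_zero k hz0)
      have hrec : ∀ k : ℕ, t (k + 1) = t k * ((al + k) * (be + k) / ((ga + k) * (1 + k))) := by
        intro k
        rw [ht]
        simp only
        rw [poch_succ, poch_succ, poch_succ, Nat.factorial_succ]
        have h1 : poch ga k ≠ 0 := poch_ne_zero hga k
        have h2 : (Nat.factorial k : ℝ) ≠ 0 := by exact_mod_cast k.factorial_ne_zero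
        have h3 : ((k : ℝ) + 1) ≠ 0 := by positivity
        push_cast
        field_simp
        ring
      have hratio : ∀ k : ℕ, ‖f (k + 1)‖ / ‖f k‖
          = |(al + k) * (be + k) / ((ga + k) * (1 + k))| * ‖z‖ := by
        intro k
        have h1 : ‖f k‖ = |t k| * ‖z‖ ^ k := by
          rw [hf]
          simp [abs_of_nonneg, Complex.norm_real, norm_mul, norm_pow]
        have h2 : ‖f (k + 1)‖ = |t k| * |(al + k) * (be + k) / ((ga + k) * (1 + k))|
            * (‖z‖ ^ k * ‖z‖) := by
          rw [hf]
          simp only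
          rw [hrec k, Complex.ofReal_mul]
          simp only [norm_mul, norm_pow, Complex.norm_real, Real.norm_eq_abs, pow_succ]
          try ring
        rw [h1, h2]
        have hzk : ‖z‖ ^ k ≠ 0 := pow_ne_zero k (by simpa using hz0)
        have htk : |t k| ≠ 0 := abs_ne_zero.2 (htne k)
        field_simp
      have hlim : Tendsto (fun k : ℕ => ‖f (k + 1)‖ / ‖f k‖) atTop (𝓝 (‖z‖)) := by
        have hbase : Tendsto (fun k : ℕ => (al + k) * (be + k) / ((ga + k) * (1 + k)))
            atTop (𝓝 1) := by
          have hx := (tendsto_ratio_aux al).mul (tendsto_ratio_aux2 be ga hga)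
          have heq : ∀ k : ℕ, (al + k) / ((1 : ℝ) + k) * ((be + k) / (ga + k))
              = (al + k) * (be + k) / ((ga + k) * (1 + k)) := by
            intro k
            rw [div_mul_div_comm]
            ring_nf
          simp_rw [heq] at hx
          simpa using hx
        have habs := (hbase.abs.mul_const (‖z‖))
        rw [abs_one, one_mul] at habs
        refine habs.congr fun k => (hratio k).symm
      have hsum : Summable fun k => ‖f k‖ := by
        refine summable_of_ratio_test_tendsto_lt_one hz
          (Eventually.of_forall fun k => norm_ne_zero_iff.2 (hfne k)) ?_
        have he : (fun k : ℕ => ‖‖f (k + 1)‖‖ / ‖‖f k‖‖) = fun k => ‖f (k + 1)‖ / ‖f k‖ := by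
          funext k
          rw [norm_norm, norm_norm]
        rw [he]
        exact hlim
      exact hsum

/-- Padé's explicit formula for the remainder: for `|z| < 1`,
`Q_{mn}(z) ₂F₁(a,1;c;z) − P_{mn}(z) = S_{mn} z^{m+n+1} ₂F₁(a+m+1, n+1; c+m+n+1; z)`. -/
theorem pade_remainder_formula (a c : ℝ) (hc : 0 < c)
    (m n : ℕ) (hm : 0 < m) (hn : 0 < n) (hmn : n - 1 ≤ m) :
    ∀ z : ℂ, ‖z‖ < 1 →
      padeDenomFun m n a c z * hyp2F1 a 1 c z - padeNumFun m n a c z =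
        ((padeS m n a c : ℝ) : ℂ) * z ^ (m + n + 1) *
          hyp2F1 (a + m + 1) (n + 1) (c + m + n + 1) z := by
  intro z hz
  have hnm1 : n ≤ m + 1 := by omega
  -- series representations
  have hQ : padeDenomFun m n a c z = ∑' l : ℕ, ((qcoef m n a c l : ℝ) : ℂ) * z ^ l := by
    rw [padeDenomFun]
    exact (tsum_eq_sum fun l hl => by
      rw [Finset.mem_range, not_lt] at hl
      have h0 : qcoef m n a c l = 0 := qcoef_eq_zero (by omega)
      rw [qcoef] at h0
      rw [h0]
      simp).symm
  have hF : hyp2F1 a 1 c z = ∑' k : ℕ, ((fcoef a c k : ℝ) : ℂ) * z ^ k := rfl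
  -- summability
  have hq : Summable fun l : ℕ => ‖((qcoef m n a c l : ℝ) : ℂ) * z ^ l‖ := by
    refine summable_of_ne_finset_zero (s := Finset.range (n + 1)) fun l hl => ?_
    rw [Finset.mem_range, not_lt] at hl
    rw [qcoef_eq_zero (by omega : n < l)]
    simp
  have hf : Summable fun k : ℕ => ‖((fcoef a c k : ℝ) : ℂ) * z ^ k‖ := by
    have := hyp_summable (al := a) (be := 1) (ga := c) hc hz
    simpa [fcoef] using this
  -- Cauchy product
  have hprod : padeDenomFun m n a c z * hyp2F1 a 1 c z
      = ∑' r : ℕ, ∑ l ∈ Finset.range (r + 1),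
          (((qcoef m n a c l : ℝ) : ℂ) * z ^ l)
            * (((fcoef a c (r - l) : ℝ) : ℂ) * z ^ (r - l)) := by
    rw [hQ, hF]
    exact tsum_mul_tsum_eq_tsum_sum_range_of_summable_norm hq hf
  have hinner : ∀ r : ℕ,
      (∑ l ∈ Finset.range (r + 1),
        (((qcoef m n a c l : ℝ) : ℂ) * z ^ l)
          * (((fcoef a c (r - l) : ℝ) : ℂ) * z ^ (r - l)))
      = ((gcoef m n a c r : ℝ) : ℂ) * z ^ r := by
    intro r
    have hg : ((gcoef m n a c r : ℝ) : ℂ)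
        = ∑ l ∈ Finset.range (r + 1),
            ((qcoef m n a c l : ℝ) : ℂ) * ((fcoef a c (r - l) : ℝ) : ℂ) := by
      rw [gcoef]
      push_cast
      rfl
    rw [hg, Finset.sum_mul]
    refine Finset.sum_congr rfl fun l hl => ?_
    rw [Finset.mem_range] at hl
    have hpow : z ^ l * z ^ (r - l) = z ^ r := by
      rw [← pow_add]
      congr 1
      omega
    calc (((qcoef m n a c l : ℝ) : ℂ) * z ^ l) * (((fcoef a c (r - l) : ℝ) : ℂ) * z ^ (r - l))
        = ((qcoef m n a c l : ℝ) : ℂ) * ((fcoef a c (r - l) : ℝ) : ℂ) * (z ^ l * z ^ (r - l)) := by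
          ring
      _ = _ := by rw [hpow]
  have hGsum : Summable fun r : ℕ => ((gcoef m n a c r : ℝ) : ℂ) * z ^ r := by
    have h0 := (summable_norm_sum_mul_range_of_summable_norm hq hf).of_norm
    exact h0.congr hinner
  have hsplit := Summable.sum_add_tsum_nat_add (f := fun r : ℕ => ((gcoef m n a c r : ℝ) : ℂ) * z ^ r)
    (m + n + 1) hGsum
  -- finite part equals the numerator polynomial
  have hfin : ∑ r ∈ Finset.range (m + n + 1), ((gcoef m n a c r : ℝ) : ℂ) * z ^ r
      = padeNumFun m n a c z := by
    rw [Finset.range_eq_Ico,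
      ← Finset.sum_Ico_consecutive _ (by omega : 0 ≤ m + 1) (by omega : m + 1 ≤ m + n + 1)]
    have hzero : ∑ r ∈ Finset.Ico (m + 1) (m + n + 1), ((gcoef m n a c r : ℝ) : ℂ) * z ^ r = 0 := by
      refine Finset.sum_eq_zero fun r hr => ?_
      rw [Finset.mem_Ico] at hr
      rw [gcoef_vanish hc (by omega : n ≤ r) (by omega : m < r) (by omega : r ≤ m + n)]
      simp
    rw [hzero, add_zero, ← Finset.range_eq_Ico, padeNumFun]
    exact Finset.sum_congr rfl fun r _ => by rw [gcoef_eq_padeNumCoeff]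
  -- tail
  have htail : (∑' k : ℕ, ((gcoef m n a c (k + (m + n + 1)) : ℝ) : ℂ) * z ^ (k + (m + n + 1)))
      = ((padeS m n a c : ℝ) : ℂ) * z ^ (m + n + 1)
          * hyp2F1 (a + m + 1) (n + 1) (c + m + n + 1) z := by
    have hterm : ∀ k : ℕ, ((gcoef m n a c (k + (m + n + 1)) : ℝ) : ℂ) * z ^ (k + (m + n + 1))
        = (((padeS m n a c : ℝ) : ℂ) * z ^ (m + n + 1))
            * ((((poch (a + m + 1) k * poch ((n : ℝ) + 1) k
                / (poch (c + m + n + 1) k * (Nat.factorial k))) : ℝ) : ℂ) * z ^ k) := by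
      intro k
      rw [gcoef_tail hc k, pow_add]
      push_cast
      ring
    rw [tsum_congr hterm, tsum_mul_left]
    rfl
  rw [hprod, tsum_congr hinner, ← hsplit, hfin, htail]
  ring
end
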